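/- Relativized confluence of CAU⁻σ: if M reduces (in CAU⁻σ) to N and to R, and the στ-normal forms στ(N) and στ(R) are joinable in CAU⁻ (i.e., there exists S with στ(N) ↠ S and στ(R) ↠ S in CAU⁻), then N and R are joinable in CAU⁻σ. -/

import Mathlib

namespace CAU

/-! ## CAU⁻ syntax (de Bruijn, pure: no explicit operators) -/

/-- Trails of CAU⁻. -/
inductive NTr : Type
  | r : NTr
  | t : NTr → NTr → NTr
  | pb : NTr                      -- β
  | pbb : NTr                     -- β!
  | ti : NTr
  | lam : NTr → NTr
  | ap : NTr → NTr → NTr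
  | lets : NTr → NTr → NTr
  | tb : (Fin 9 → NTr) → NTr
  deriving Inhabited

/-- Terms of CAU⁻ (de Bruijn indices). -/
inductive NTm : Type
  | var : ℕ → NTm
  | lam : NTm → NTm
  | ap : NTm → NTm → NTm
  | lets : NTm → NTm → NTm
  | bang : NTr → NTm → NTm
  | ann : NTr → NTm → NTm         -- q ▷ M
  | insp : (Fin 9 → NTm) → NTm    -- ι(ϑ)
  deriving Inhabited

/-- Permutation (τ) reduction on CAU⁻ trails, closed under arbitrary contexts. -/
inductive TStepQ : NTr → NTr → Prop
  | tReflR (q) : TStepQ (.t q .r) q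
  | tReflL (q) : TStepQ (.t .r q) q
  | tbRefl : TStepQ (.tb fun _ => .r) .r
  | apRefl : TStepQ (.ap .r .r) .r
  | lamRefl : TStepQ (.lam .r) .r
  | letsRefl : TStepQ (.lets .r .r) .r
  | tAssoc (q₁ q₂ q₃) : TStepQ (.t (.t q₁ q₂) q₃) (.t q₁ (.t q₂ q₃))
  | tLam (q q') : TStepQ (.t (.lam q) (.lam q')) (.lam (.t q q'))
  | tLamT (q₁ q₁' q) :
      TStepQ (.t (.lam q₁) (.t (.lam q₁') q)) (.t (.lam (.t q₁ q₁')) q)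
  | tAp (q₁ q₂ q₁' q₂') :
      TStepQ (.t (.ap q₁ q₂) (.ap q₁' q₂')) (.ap (.t q₁ q₁') (.t q₂ q₂'))
  | tApT (q₁ q₂ q₁' q₂' q) :
      TStepQ (.t (.ap q₁ q₂) (.t (.ap q₁' q₂') q)) (.t (.ap (.t q₁ q₁') (.t q₂ q₂')) q)
  | tLets (q₁ q₂ q₁' q₂') :
      TStepQ (.t (.lets q₁ q₂) (.lets q₁' q₂')) (.lets (.t q₁ q₁') (.t q₂ q₂'))
  | tLetsT (q₁ q₂ q₁' q₂' q) :
      TStepQ (.t (.lets q₁ q₂) (.t (.lets q₁' q₂') q)) (.t (.lets (.t q₁ q₁') (.t q₂ q₂')) q)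
  | tTb (ζ₁ ζ₂) : TStepQ (.t (.tb ζ₁) (.tb ζ₂)) (.tb fun i => .t (ζ₁ i) (ζ₂ i))
  | tTbT (ζ₁ ζ₂ q) :
      TStepQ (.t (.tb ζ₁) (.t (.tb ζ₂) q)) (.t (.tb fun i => .t (ζ₁ i) (ζ₂ i)) q)
  | tL {q q''} (q') : TStepQ q q'' → TStepQ (.t q q') (.t q'' q')
  | tR {q' q''} (q) : TStepQ q' q'' → TStepQ (.t q q') (.t q q'')
  | lamC {q q'} : TStepQ q q' → TStepQ (.lam q) (.lam q')
  | apL {q q''} (q') : TStepQ q q'' → TStepQ (.ap q q') (.ap q'' q')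
  | apR {q' q''} (q) : TStepQ q' q'' → TStepQ (.ap q q') (.ap q q'')
  | letsL {q q''} (q') : TStepQ q q'' → TStepQ (.lets q q') (.lets q'' q')
  | letsR {q' q''} (q) : TStepQ q' q'' → TStepQ (.lets q q') (.lets q q'')
  | tbC {ζ} (i : Fin 9) {q'} : TStepQ (ζ i) q' →
      TStepQ (.tb ζ) (.tb (Function.update ζ i q'))

/-- Permutation (τ) reduction on CAU⁻ terms, closed under arbitrary contexts. -/
inductive TStepN : NTm → NTm → Prop
  | annRefl (M) : TStepN (.ann .r M) M
  | annAnn (q q' M) : TStepN (.ann q (.ann q' M)) (.ann (.t q q') M)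
  | bangAnn (q q' M) : TStepN (.bang q (.ann q' M)) (.bang (.t q q') M)
  | lamAnn (q M) : TStepN (.lam (.ann q M)) (.ann (.lam q) (.lam M))
  | apAnnL (q M N) : TStepN (.ap (.ann q M) N) (.ann (.ap q .r) (.ap M N))
  | apAnnR (q M N) : TStepN (.ap M (.ann q N)) (.ann (.ap .r q) (.ap M N))
  | letsAnnL (q M N) : TStepN (.lets (.ann q M) N) (.ann (.lets q .r) (.lets M N))
  | letsAnnR (q M N) : TStepN (.lets M (.ann q N)) (.ann (.lets .r q) (.lets M N))
  | inspAnn (ϑ : Fin 9 → NTm) (i : Fin 9) (q M) : ϑ i = .ann q M →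
      TStepN (.insp ϑ)
        (.ann (.tb (Function.update (fun _ => NTr.r) i q)) (.insp (Function.update ϑ i M)))
  | lamC {M M'} : TStepN M M' → TStepN (.lam M) (.lam M')
  | apL {M M'} (N) : TStepN M M' → TStepN (.ap M N) (.ap M' N)
  | apR {N N'} (M) : TStepN N N' → TStepN (.ap M N) (.ap M N')
  | letsL {M M'} (N) : TStepN M M' → TStepN (.lets M N) (.lets M' N)
  | letsR {N N'} (M) : TStepN N N' → TStepN (.lets M N) (.lets M N')
  | bangQ {q q'} (M) : TStepQ q q' → TStepN (.bang q M) (.bang q' M)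
  | bangM {M M'} (q) : TStepN M M' → TStepN (.bang q M) (.bang q M')
  | annQ {q q'} (M) : TStepQ q q' → TStepN (.ann q M) (.ann q' M)
  | annM {M M'} (q) : TStepN M M' → TStepN (.ann q M) (.ann q M')
  | inspC {ϑ} (i : Fin 9) {M'} : TStepN (ϑ i) M' →
      TStepN (.insp ϑ) (.insp (Function.update ϑ i M'))

end CAU

/-! ## CAU⁻σ syntax: explicit substitutions and explicit trail projections -/

namespace CAU

mutual
  /-- Terms of CAU⁻σ. -/
  inductive Tm : Type
    | one : Tm                               -- de Bruijn index 1
    | lam : Tm → Tm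
    | ap : Tm → Tm → Tm
    | lets : Tm → Tm → Tm
    | bang : Tr → Tm → Tm
    | ann : Tr → Tm → Tm                     -- q ▷ M
    | insp : (Fin 9 → Tm) → Tm               -- ι(ϑ)
    | sub : Tm → Sb → Tm                     -- closure M[s]
    | er : Tm → Tm                           -- explicit trail erasure ⌊M⌋
  /-- Trails of CAU⁻σ. -/
  inductive Tr : Type
    | r : Tr
    | t : Tr → Tr → Tr
    | pb : Tr                                -- β
    | pbb : Tr                               -- β!
    | ti : Tr
    | lam : Tr → Tr
    | ap : Tr → Tr → Tr
    | lets : Tr → Tr → Tr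
    | tb : (Fin 9 → Tr) → Tr
    | ext : Tm → Tr                          -- explicit trail extraction ⌈M⌉
  /-- Explicit substitutions of CAU⁻σ. -/
  inductive Sb : Type
    | id : Sb                                -- ⟨⟩
    | sh : Sb                                -- ↑
    | cons : Tm → Sb → Sb                    -- M · s
    | comp : Sb → Sb → Sb                    -- s ∘ t
end

instance : Inhabited Tm := ⟨Tm.one⟩
instance : Inhabited Tr := ⟨Tr.r⟩
instance : Inhabited Sb := ⟨Sb.id⟩

/-- `pow n` is the iterated lift `↑^(n+1)`. -/
def pow : ℕ → Sb
  | 0 => .sh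
  | n + 1 => .comp .sh (pow n)

mutual
  /-- σ∪τ one-step reduction on CAU⁻σ terms (closed under arbitrary contexts). -/
  inductive StepT : Tm → Tm → Prop
    -- σ-rules for explicit substitutions
    | subOneId : StepT (.sub .one .id) .one
    | subOneCons (M s) : StepT (.sub .one (.cons M s)) M
    | subLam (M s) : StepT (.sub (.lam M) s) (.lam (.sub M (.cons .one (.comp s .sh))))
    | subAp (M N s) : StepT (.sub (.ap M N) s) (.ap (.sub M s) (.sub N s))
    | subBang (q M s) : StepT (.sub (.bang q M) s) (.bang q (.sub M s))
    | subLets (M N s) :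
        StepT (.sub (.lets M N) s) (.lets (.sub M s) (.sub N (.cons .one (.comp s .sh))))
    | subAnn (q M s) : StepT (.sub (.ann q M) s) (.ann q (.sub M s))
    | subInsp (ϑ s) : StepT (.sub (.insp ϑ) s) (.insp fun i => .sub (ϑ i) s)
    | subSub (M s t) : StepT (.sub (.sub M s) t) (.sub M (.comp s t))
    -- σ-rules for explicit trail erasure
    | erOne : StepT (.er .one) .one
    | erOneSh (n) : StepT (.er (.sub .one (pow n))) (.sub .one (pow n))
    | erLam (M) : StepT (.er (.lam M)) (.lam (.er M))
    | erAp (M N) : StepT (.er (.ap M N)) (.ap (.er M) (.er N))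
    | erBang (q M) : StepT (.er (.bang q M)) (.bang q M)
    | erLets (M N) : StepT (.er (.lets M N)) (.lets (.er M) (.er N))
    | erAnn (q M) : StepT (.er (.ann q M)) (.er M)
    | erInsp (ϑ) : StepT (.er (.insp ϑ)) (.insp fun i => .er (ϑ i))
    -- τ-rules on terms
    | annRefl (M) : StepT (.ann .r M) M
    | annAnn (q q' M) : StepT (.ann q (.ann q' M)) (.ann (.t q q') M)
    | bangAnn (q q' M) : StepT (.bang q (.ann q' M)) (.bang (.t q q') M)
    | lamAnn (q M) : StepT (.lam (.ann q M)) (.ann (.lam q) (.lam M))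
    | apAnnL (q M N) : StepT (.ap (.ann q M) N) (.ann (.ap q .r) (.ap M N))
    | apAnnR (q M N) : StepT (.ap M (.ann q N)) (.ann (.ap .r q) (.ap M N))
    | letsAnnL (q M N) : StepT (.lets (.ann q M) N) (.ann (.lets q .r) (.lets M N))
    | letsAnnR (q M N) : StepT (.lets M (.ann q N)) (.ann (.lets .r q) (.lets M N))
    | inspAnn (ϑ : Fin 9 → Tm) (i : Fin 9) (q M) : ϑ i = .ann q M →
        StepT (.insp ϑ)
          (.ann (.tb (Function.update (fun _ => Tr.r) i q)) (.insp (Function.update ϑ i M)))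
    -- congruence closure
    | lamC {M M'} : StepT M M' → StepT (.lam M) (.lam M')
    | apL {M M'} (N) : StepT M M' → StepT (.ap M N) (.ap M' N)
    | apR {N N'} (M) : StepT N N' → StepT (.ap M N) (.ap M N')
    | letsL {M M'} (N) : StepT M M' → StepT (.lets M N) (.lets M' N)
    | letsR {N N'} (M) : StepT N N' → StepT (.lets M N) (.lets M N')
    | bangQ {q q'} (M) : StepQ q q' → StepT (.bang q M) (.bang q' M)
    | bangM {M M'} (q) : StepT M M' → StepT (.bang q M) (.bang q M')
    | annQ {q q'} (M) : StepQ q q' → StepT (.ann q M) (.ann q' M)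
    | annM {M M'} (q) : StepT M M' → StepT (.ann q M) (.ann q M')
    | inspC {ϑ} (i : Fin 9) {M'} : StepT (ϑ i) M' →
        StepT (.insp ϑ) (.insp (Function.update ϑ i M'))
    | subM {M M'} (s) : StepT M M' → StepT (.sub M s) (.sub M' s)
    | subS {s s'} (M) : StepS s s' → StepT (.sub M s) (.sub M s')
    | erC {M M'} : StepT M M' → StepT (.er M) (.er M')
  /-- σ∪τ one-step reduction on CAU⁻σ trails. -/
  inductive StepQ : Tr → Tr → Prop
    -- σ-rules for explicit trail extraction
    | extOne : StepQ (.ext .one) .r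
    | extOneSh (n) : StepQ (.ext (.sub .one (pow n))) .r
    | extLam (M) : StepQ (.ext (.lam M)) (.lam (.ext M))
    | extAp (M N) : StepQ (.ext (.ap M N)) (.ap (.ext M) (.ext N))
    | extBang (q M) : StepQ (.ext (.bang q M)) .r
    | extLets (M N) : StepQ (.ext (.lets M N)) (.lets (.ext M) (.ext N))
    | extAnn (q M) : StepQ (.ext (.ann q M)) (.t q (.ext M))
    | extInsp (ϑ) : StepQ (.ext (.insp ϑ)) (.tb fun i => .ext (ϑ i))
    -- τ-rules on trails
    | tReflR (q) : StepQ (.t q .r) q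
    | tReflL (q) : StepQ (.t .r q) q
    | tbRefl : StepQ (.tb fun _ => .r) .r
    | apRefl : StepQ (.ap .r .r) .r
    | lamRefl : StepQ (.lam .r) .r
    | letsRefl : StepQ (.lets .r .r) .r
    | tAssoc (q₁ q₂ q₃) : StepQ (.t (.t q₁ q₂) q₃) (.t q₁ (.t q₂ q₃))
    | tLam (q q') : StepQ (.t (.lam q) (.lam q')) (.lam (.t q q'))
    | tLamT (q₁ q₁' q) :
        StepQ (.t (.lam q₁) (.t (.lam q₁') q)) (.t (.lam (.t q₁ q₁')) q)
    | tAp (q₁ q₂ q₁' q₂') :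
        StepQ (.t (.ap q₁ q₂) (.ap q₁' q₂')) (.ap (.t q₁ q₁') (.t q₂ q₂'))
    | tApT (q₁ q₂ q₁' q₂' q) :
        StepQ (.t (.ap q₁ q₂) (.t (.ap q₁' q₂') q)) (.t (.ap (.t q₁ q₁') (.t q₂ q₂')) q)
    | tLets (q₁ q₂ q₁' q₂') :
        StepQ (.t (.lets q₁ q₂) (.lets q₁' q₂')) (.lets (.t q₁ q₁') (.t q₂ q₂'))
    | tLetsT (q₁ q₂ q₁' q₂' q) :
        StepQ (.t (.lets q₁ q₂) (.t (.lets q₁' q₂') q)) (.t (.lets (.t q₁ q₁') (.t q₂ q₂')) q)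
    | tTb (ζ₁ ζ₂) : StepQ (.t (.tb ζ₁) (.tb ζ₂)) (.tb fun i => .t (ζ₁ i) (ζ₂ i))
    | tTbT (ζ₁ ζ₂ q) :
        StepQ (.t (.tb ζ₁) (.t (.tb ζ₂) q)) (.t (.tb fun i => .t (ζ₁ i) (ζ₂ i)) q)
    -- congruence closure
    | tL {q q''} (q') : StepQ q q'' → StepQ (.t q q') (.t q'' q')
    | tR {q' q''} (q) : StepQ q' q'' → StepQ (.t q q') (.t q q'')
    | lamC {q q'} : StepQ q q' → StepQ (.lam q) (.lam q')
    | apL {q q''} (q') : StepQ q q'' → StepQ (.ap q q') (.ap q'' q')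
    | apR {q' q''} (q) : StepQ q' q'' → StepQ (.ap q q') (.ap q q'')
    | letsL {q q''} (q') : StepQ q q'' → StepQ (.lets q q') (.lets q'' q')
    | letsR {q' q''} (q) : StepQ q' q'' → StepQ (.lets q q') (.lets q q'')
    | tbC {ζ} (i : Fin 9) {q'} : StepQ (ζ i) q' → StepQ (.tb ζ) (.tb (Function.update ζ i q'))
    | extC {M M'} : StepT M M' → StepQ (.ext M) (.ext M')
  /-- σ one-step reduction on CAU⁻σ substitutions. -/
  inductive StepS : Sb → Sb → Prop
    | idComp (s) : StepS (.comp .id s) s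
    | shId : StepS (.comp .sh .id) .sh
    | shCons (M s) : StepS (.comp .sh (.cons M s)) s
    | consComp (M s t) : StepS (.comp (.cons M s) t) (.cons (.sub M t) (.comp s t))
    | compAssoc (s₁ s₂ s₃) : StepS (.comp (.comp s₁ s₂) s₃) (.comp s₁ (.comp s₂ s₃))
    | consM {M M'} (s) : StepT M M' → StepS (.cons M s) (.cons M' s)
    | consS {s s'} (M) : StepS s s' → StepS (.cons M s) (.cons M s')
    | compL {s s''} (t) : StepS s s'' → StepS (.comp s t) (.comp s'' t)
    | compR {t t'} (s) : StepS t t' → StepS (.comp s t) (.comp s t')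
end

/-- στ-normal terms. -/
def NormalT (M : Tm) : Prop := ∀ N, ¬ StepT M N
/-- στ-normal trails. -/
def NormalQ (q : Tr) : Prop := ∀ q', ¬ StepQ q q'
/-- σ-normal substitutions. -/
def NormalS (s : Sb) : Prop := ∀ t, ¬ StepS s t

/-- `nf` is a στ-normal-form function for terms. -/
def IsNFT (nf : Tm → Tm) : Prop :=
  ∀ M, Relation.ReflTransGen StepT M (nf M) ∧ NormalT (nf M)
/-- `nfq` is a στ-normal-form function for trails. -/
def IsNFQ (nfq : Tr → Tr) : Prop :=
  ∀ q, Relation.ReflTransGen StepQ q (nfq q) ∧ NormalQ (nfq q)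
/-- `nfs` is a σ-normal-form function for substitutions. -/
def IsNFS (nfs : Sb → Sb) : Prop :=
  ∀ s, Relation.ReflTransGen StepS s (nfs s) ∧ NormalS (nfs s)

end CAU
namespace CAU

/-! ## Grammar of στ-normal forms -/

mutual
  /-- Grammar of στ-normal CAU⁻σ terms. -/
  inductive GTm : Tm → Prop
    | one : GTm .one
    | oneSh (n) : GTm (.sub .one (pow n))
    | lam {M} : GTm M → GTm (.lam M)
    | ap {M N} : GTm M → GTm N → GTm (.ap M N)
    | lets {M N} : GTm M → GTm N → GTm (.lets M N)
    | bang {q M} : GTr q → GTm M → GTm (.bang q M)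
    | ann {q M} : GTr q → GTm M → GTm (.ann q M)
    | insp {ϑ} : (∀ i, GTm (ϑ i)) → GTm (.insp ϑ)
  /-- Grammar of στ-normal CAU⁻σ trails. -/
  inductive GTr : Tr → Prop
    | r : GTr .r
    | t {q q'} : GTr q → GTr q' → GTr (.t q q')
    | pb : GTr .pb
    | pbb : GTr .pbb
    | ti : GTr .ti
    | lam {q} : GTr q → GTr (.lam q)
    | ap {q q'} : GTr q → GTr q' → GTr (.ap q q')
    | lets {q q'} : GTr q → GTr q' → GTr (.lets q q')
    | tb {ζ} : (∀ i, GTr (ζ i)) → GTr (.tb ζ)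
end

/-- Grammar of σ-normal CAU⁻σ substitutions. -/
inductive GSb : Sb → Prop
  | id : GSb .id
  | shn (n) : GSb (pow n)
  | cons {M s} : GTm M → GSb s → GSb (.cons M s)

/-! ## Focused forms and meta-level projections -/

/-- Meta-level trail erasure ⌊M⌋*, relative to a normal form function. -/
def metaErase (nf : Tm → Tm) (M : Tm) : Tm :=
  match nf M with
  | .ann _ M' => M'
  | N => N

/-- Meta-level trail extraction ⌈M⌉*, relative to a normal form function. -/
def metaExt (nf : Tm → Tm) (M : Tm) : Tr :=
  match nf M with
  | .ann q _ => q
  | _ => .r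

/-- The focused form ⟨M⟩ = ⌈M⌉* ▷ ⌊M⌋*. -/
def focusT (nf : Tm → Tm) (M : Tm) : Tm := .ann (metaExt nf M) (metaErase nf M)

/-- Focusing a σ-normal substitution pointwise. -/
def focusSb (nf : Tm → Tm) : Sb → Sb
  | .cons M s => .cons (focusT nf M) (focusSb nf s)
  | s => s

end CAU
namespace CAU

/-! ## Embedding pure (σ-normal) terms into CAU⁻σ -/

/-- Embedding of pure trails. -/
def toTr : NTr → Tr
  | .r => .r
  | .t q q' => .t (toTr q) (toTr q')
  | .pb => .pb
  | .pbb => .pbb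
  | .ti => .ti
  | .lam q => .lam (toTr q)
  | .ap q q' => .ap (toTr q) (toTr q')
  | .lets q q' => .lets (toTr q) (toTr q')
  | .tb ζ => .tb fun i => toTr (ζ i)

/-- Embedding of pure terms: de Bruijn index `var n` (0-based) becomes `1[↑ⁿ]`. -/
def toTm : NTm → Tm
  | .var 0 => .one
  | .var (n+1) => .sub .one (pow n)
  | .lam M => .lam (toTm M)
  | .ap M N => .ap (toTm M) (toTm N)
  | .lets M N => .lets (toTm M) (toTm N)
  | .bang q M => .bang (toTr q) (toTm M)
  | .ann q M => .ann (toTr q) (toTm M)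
  | .insp ϑ => .insp fun i => toTm (ϑ i)

/-- `shiftP p` is the substitution `↑ᵖ` (with `↑⁰ = ⟨⟩`). -/
def shiftP : ℕ → Sb
  | 0 => .id
  | n + 1 => pow n

/-- The substitution `N₁ · … · N_k · ↑ᵖ`. -/
def mkSub : List Tm → ℕ → Sb
  | [], p => shiftP p
  | M :: l, p => .cons M (mkSub l p)

/-! ## Meta-level substitution on pure terms -/

/-- Lift by one all free indices ≥ d. -/
def liftN (d : ℕ) : NTm → NTm
  | .var n => if n < d then .var n else .var (n + 1)
  | .lam M => .lam (liftN (d+1) M)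
  | .ap M N => .ap (liftN d M) (liftN d N)
  | .lets M N => .lets (liftN d M) (liftN d (N))
  | .bang q M => .bang q (liftN d M)
  | .ann q M => .ann q (liftN d M)
  | .insp ϑ => .insp fun i => liftN d (ϑ i)

/-- Meta-level simultaneous substitution `M{N⃗}ₚ` on pure terms. -/
def msubst : NTm → ℕ → List NTm → NTm
  | .var n, p, l => if h : n < l.length then l.get ⟨n, h⟩ else .var (n - l.length + p)
  | .lam M, p, l => .lam (msubst M (p+1) (.var 0 :: l.map (liftN 0)))
  | .ap M N, p, l => .ap (msubst M p l) (msubst N p l)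
  | .lets M N, p, l => .lets (msubst M p l) (msubst N (p+1) (.var 0 :: l.map (liftN 0)))
  | .bang q M, p, l => .bang q (msubst M p l)
  | .ann q M, p, l => .ann q (msubst M p l)
  | .insp ϑ, p, l => .insp fun i => msubst (ϑ i) p l

/-! ## Trail inspection: structural recursion qϑ over trails -/

/-- Structural recursion `qϑ` over a pure trail, applying the nine inspection branches. -/
def recTrailN : NTr → (Fin 9 → NTm) → NTm
  | .r, ϑ => ϑ 0
  | .t q q', ϑ => .ap (.ap (ϑ 1) (recTrailN q ϑ)) (recTrailN q' ϑ)
  | .pb, ϑ => ϑ 2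
  | .pbb, ϑ => ϑ 3
  | .ti, ϑ => ϑ 4
  | .lam q, ϑ => .ap (ϑ 5) (recTrailN q ϑ)
  | .ap q q', ϑ => .ap (.ap (ϑ 6) (recTrailN q ϑ)) (recTrailN q' ϑ)
  | .lets q q', ϑ => .ap (.ap (ϑ 7) (recTrailN q ϑ)) (recTrailN q' ϑ)
  | .tb ζ, ϑ => (List.ofFn fun i => recTrailN (ζ i) ϑ).foldl .ap (ϑ 8)

/-- Structural recursion `qϑ` over a CAU⁻σ trail (junk value on explicit extractions,
which cannot occur in the στ-normal trails it is applied to). -/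
def recTrailT : Tr → (Fin 9 → Tm) → Tm
  | .r, ϑ => ϑ 0
  | .t q q', ϑ => .ap (.ap (ϑ 1) (recTrailT q ϑ)) (recTrailT q' ϑ)
  | .pb, ϑ => ϑ 2
  | .pbb, ϑ => ϑ 3
  | .ti, ϑ => ϑ 4
  | .lam q, ϑ => .ap (ϑ 5) (recTrailT q ϑ)
  | .ap q q', ϑ => .ap (.ap (ϑ 6) (recTrailT q ϑ)) (recTrailT q' ϑ)
  | .lets q q', ϑ => .ap (.ap (ϑ 7) (recTrailT q ϑ)) (recTrailT q' ϑ)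
  | .tb ζ, ϑ => (List.ofFn fun i => recTrailT (ζ i) ϑ).foldl .ap (ϑ 8)
  | .ext _, ϑ => ϑ 0

/-! ## Meta-level β-reduction on pure (σ-normal) terms -/

/-- One inspection step in a bang-free context of a pure term:
some `ι(ϑ)` not guarded by a bang is replaced by `ti ▷ qϑ`. -/
inductive FInspN (q : NTr) : NTm → NTm → Prop
  | insp (ϑ) : FInspN q (.insp ϑ) (.ann .ti (recTrailN q ϑ))
  | lam {M M'} : FInspN q M M' → FInspN q (.lam M) (.lam M')
  | apL {M M'} (N) : FInspN q M M' → FInspN q (.ap M N) (.ap M' N)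
  | apR {N N'} (M) : FInspN q N N' → FInspN q (.ap M N) (.ap M N')
  | letsL {M M'} (N) : FInspN q M M' → FInspN q (.lets M N) (.lets M' N)
  | letsR {N N'} (M) : FInspN q N N' → FInspN q (.lets M N) (.lets M N')
  | ann {M M'} (q') : FInspN q M M' → FInspN q (.ann q' M) (.ann q' M')
  | inspC {ϑ} (i : Fin 9) {M'} : FInspN q (ϑ i) M' →
      FInspN q (.insp ϑ) (.insp (Function.update ϑ i M'))

/-- Meta-level β-reduction on pure (σ-normal) terms, closed under σ-normal contexts. -/
inductive BetaN : NTm → NTm → Prop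
  | beta (M N) : BetaN (.ap (.lam M) N) (.ann .pb (msubst M 0 [N]))
  | betaBang (q M N) : BetaN (.lets (.bang q M) N) (.ann .pbb (msubst N 0 [.ann q M]))
  | insp {q M M'} : FInspN q M M' → BetaN (.bang q M) (.bang q M')
  | lam {M M'} : BetaN M M' → BetaN (.lam M) (.lam M')
  | apL {M M'} (N) : BetaN M M' → BetaN (.ap M N) (.ap M' N)
  | apR {N N'} (M) : BetaN N N' → BetaN (.ap M N) (.ap M N')
  | letsL {M M'} (N) : BetaN M M' → BetaN (.lets M N) (.lets M' N)
  | letsR {N N'} (M) : BetaN N N' → BetaN (.lets M N) (.lets M N')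
  | bang {M M'} (q) : BetaN M M' → BetaN (.bang q M) (.bang q M')
  | ann {M M'} (q) : BetaN M M' → BetaN (.ann q M) (.ann q M')
  | inspC {ϑ} (i : Fin 9) {M'} : BetaN (ϑ i) M' →
      BetaN (.insp ϑ) (.insp (Function.update ϑ i M'))

/-! ## Lazy Beta-reduction of CAU⁻σ -/

/-- One inspection step in a context whose hole is not inside a bang, a substitution,
or an erasure: some `ι(ϑ)` is replaced by `ti ▷ qϑ`. -/
inductive FInspT (q : Tr) : Tm → Tm → Prop
  | insp (ϑ) : FInspT q (.insp ϑ) (.ann .ti (recTrailT q ϑ))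
  | lam {M M'} : FInspT q M M' → FInspT q (.lam M) (.lam M')
  | apL {M M'} (N) : FInspT q M M' → FInspT q (.ap M N) (.ap M' N)
  | apR {N N'} (M) : FInspT q N N' → FInspT q (.ap M N) (.ap M N')
  | letsL {M M'} (N) : FInspT q M M' → FInspT q (.lets M N) (.lets M' N)
  | letsR {N N'} (M) : FInspT q N N' → FInspT q (.lets M N) (.lets M N')
  | ann {M M'} (q') : FInspT q M M' → FInspT q (.ann q' M) (.ann q' M')
  | inspC {ϑ} (i : Fin 9) {M'} : FInspT q (ϑ i) M' →
      FInspT q (.insp ϑ) (.insp (Function.update ϑ i M'))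

mutual
  /-- The lazy Beta-relation of CAU⁻σ (relative to a normal form function `nfq`
  for trails, used in the trail inspection rule), closed under evaluation contexts
  `E_σ` whose hole does not occur inside an erasure. -/
  inductive LBeta (nfq : Tr → Tr) : Tm → Tm → Prop
    | beta (M N) :
        LBeta nfq (.ap (.lam M) N)
          (.ann (.t (.ap (.lam (.ext M)) (.ext N)) .pb) (.sub (.er M) (.cons (.er N) .id)))
    | betaBang (q M N) :
        LBeta nfq (.lets (.bang q M) N)
          (.ann (.t (.lets .r (.ext N)) .pbb) (.sub (.er N) (.cons (.ann q M) .id)))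
    | insp {q M M'} : FInspT (nfq (.t q (.ext M))) M M' →
        LBeta nfq (.bang q M) (.bang q M')
    | lam {M M'} : LBeta nfq M M' → LBeta nfq (.lam M) (.lam M')
    | apL {M M'} (N) : LBeta nfq M M' → LBeta nfq (.ap M N) (.ap M' N)
    | apR {N N'} (M) : LBeta nfq N N' → LBeta nfq (.ap M N) (.ap M N')
    | letsL {M M'} (N) : LBeta nfq M M' → LBeta nfq (.lets M N) (.lets M' N)
    | letsR {N N'} (M) : LBeta nfq N N' → LBeta nfq (.lets M N) (.lets M N')
    | bang {M M'} (q) : LBeta nfq M M' → LBeta nfq (.bang q M) (.bang q M')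
    | ann {M M'} (q) : LBeta nfq M M' → LBeta nfq (.ann q M) (.ann q M')
    | inspC {ϑ} (i : Fin 9) {M'} : LBeta nfq (ϑ i) M' →
        LBeta nfq (.insp ϑ) (.insp (Function.update ϑ i M'))
    | subM {M M'} (s) : LBeta nfq M M' → LBeta nfq (.sub M s) (.sub M' s)
    | subS {s s'} (M) : LBetaSub nfq s s' → LBeta nfq (.sub M s) (.sub M s')
  /-- Lazy Beta-reduction inside substitutions. -/
  inductive LBetaSub (nfq : Tr → Tr) : Sb → Sb → Prop
    | consM {M M'} (s) : LBeta nfq M M' → LBetaSub nfq (.cons M s) (.cons M' s)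
    | consS {s s'} (M) : LBetaSub nfq s s' → LBetaSub nfq (.cons M s) (.cons M s')
    | compL {s s''} (t) : LBetaSub nfq s s'' → LBetaSub nfq (.comp s t) (.comp s'' t)
    | compR {t t'} (s) : LBetaSub nfq t t' → LBetaSub nfq (.comp s t) (.comp s t')
end

/-- CAU⁻σ reduction: the union of Beta-reduction and στ-equivalence. -/
def SRed (nfq : Tr → Tr) (M N : Tm) : Prop :=
  LBeta nfq M N ∨ Relation.EqvGen StepT M N

/-! ## Naive (eager) CAU⁻ reduction on στ-normal terms -/

/-- A principal contraction in the style of CAU⁻ (using an explicit substitution for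
the redex, to be normalized away immediately afterwards), closed under arbitrary
CAU⁻ contexts. -/
inductive NaiveBeta : Tm → Tm → Prop
  | beta (M N) : NaiveBeta (.ap (.lam M) N) (.ann .pb (.sub M (.cons N .id)))
  | betaBang (q M N) :
      NaiveBeta (.lets (.bang q M) N) (.ann .pbb (.sub N (.cons (.ann q M) .id)))
  | insp {q M M'} : FInspT q M M' → NaiveBeta (.bang q M) (.bang q M')
  | lam {M M'} : NaiveBeta M M' → NaiveBeta (.lam M) (.lam M')
  | apL {M M'} (N) : NaiveBeta M M' → NaiveBeta (.ap M N) (.ap M' N)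
  | apR {N N'} (M) : NaiveBeta N N' → NaiveBeta (.ap M N) (.ap M N')
  | letsL {M M'} (N) : NaiveBeta M M' → NaiveBeta (.lets M N) (.lets M' N)
  | letsR {N N'} (M) : NaiveBeta N N' → NaiveBeta (.lets M N) (.lets M N')
  | bang {M M'} (q) : NaiveBeta M M' → NaiveBeta (.bang q M) (.bang q M')
  | ann {M M'} (q) : NaiveBeta M M' → NaiveBeta (.ann q M) (.ann q M')
  | inspC {ϑ} (i : Fin 9) {M'} : NaiveBeta (ϑ i) M' →
      NaiveBeta (.insp ϑ) (.insp (Function.update ϑ i M'))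

/-- One step of CAU⁻ reduction: a principal contraction followed by normalization. -/
def CRed (nf : Tm → Tm) (M N : Tm) : Prop := ∃ R, NaiveBeta M R ∧ N = nf R

/-! ## The eager β̄-reduction on focused forms -/

/-- β̄-reduction: the relation on focused forms induced by meta-level β on pure terms. -/
def BbarT (nf : Tm → Tm) (A B : Tm) : Prop :=
  ∃ M N : NTm, BetaN M N ∧ A = focusT nf (toTm M) ∧ B = focusT nf (toTm N)

/-- Focusing of a σ-normal substitution `N⃗ · ↑ᵖ` given by a list of pure terms. -/
def focusNSub (nf : Tm → Tm) (l : List NTm) (p : ℕ) : Sb :=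
  mkSub (l.map fun M => focusT nf (toTm M)) p

/-- β̄-reduction on focused substitutions: one component β-reduces. -/
def BbarS (nf : Tm → Tm) (A B : Sb) : Prop :=
  ∃ (l : List NTm) (p : ℕ) (i : ℕ) (h : i < l.length) (N' : NTm),
    BetaN (l.get ⟨i, h⟩) N' ∧ A = focusNSub nf l p ∧ B = focusNSub nf (l.set i N') p

/-- One-hole σ-normal contexts over pure terms. -/
inductive NCtx : Type
  | hole : NCtx
  | lam : NCtx → NCtx
  | apL : NCtx → NTm → NCtx
  | apR : NTm → NCtx → NCtx
  | letsL : NCtx → NTm → NCtx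
  | letsR : NTm → NCtx → NCtx
  | bang : NTr → NCtx → NCtx
  | ann : NTr → NCtx → NCtx
  | insp : (Fin 9 → NTm) → Fin 9 → NCtx → NCtx

/-- Filling the hole of a σ-normal context. -/
def fillN : NCtx → NTm → NTm
  | .hole, X => X
  | .lam C, X => .lam (fillN C X)
  | .apL C N, X => .ap (fillN C X) N
  | .apR M C, X => .ap M (fillN C X)
  | .letsL C N, X => .lets (fillN C X) N
  | .letsR M C, X => .lets M (fillN C X)
  | .bang q C, X => .bang q (fillN C X)
  | .ann q C, X => .ann q (fillN C X)
  | .insp ϑ i C, X => .insp (Function.update ϑ i (fillN C X))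

end CAU
namespace CAU

/-! ## The call-by-value abstract machine -/

mutual
  /-- Machine closures. -/
  inductive Clo : Type
    | lamC : NTm → Env → Clo          -- ⌊(λM̂)[e]⌋
    | bangC : Tr → Clo → Clo          -- !_q C
  /-- Machine values `q ▷ C`. -/
  inductive Val : Type
    | mk : Tr → Clo → Val
  /-- Machine environments: lists of values. -/
  inductive Env : Type
    | nil : Env
    | cons : Val → Env → Env
end

instance : Inhabited Clo := ⟨.lamC (.var 0) .nil⟩
instance : Inhabited Val := ⟨.mk .r default⟩
instance : Inhabited Env := ⟨.nil⟩

/-- The trail of a value. -/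
def Val.tr : Val → Tr | .mk q _ => q
/-- The closure of a value. -/
def Val.clo : Val → Clo | .mk _ C => C

/-- Length of an environment. -/
def envLen : Env → ℕ
  | .nil => 0
  | .cons _ e => envLen e + 1

/-- Environment lookup `e(n)`, returning the n-th closure (0-based). -/
def lookupE : Env → ℕ → Option Clo
  | .cons (.mk _ C) _, 0 => some C
  | .cons _ e, n + 1 => lookupE e n
  | .nil, _ => none

mutual
  /-- The CAU⁻σ term denoted by a closure. -/
  def cloToTm : Clo → Tm
    | .lamC M e => .er (.sub (.lam (toTm M)) (envToSub e))
    | .bangC q C => .bang q (cloToTm C)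
  /-- The CAU⁻σ term denoted by a value. -/
  def valToTm : Val → Tm
    | .mk q C => .ann q (cloToTm C)
  /-- The explicit substitution denoted by an environment. -/
  def envToSub : Env → Sb
    | .nil => .id
    | .cons V e => .cons (valToTm V) (envToSub e)
end

/-- Pure terms closed below depth `d` (all free indices < d). -/
def closedN (d : ℕ) : NTm → Prop
  | .var n => n < d
  | .lam M => closedN (d+1) M
  | .ap M N => closedN d M ∧ closedN d N
  | .lets M N => closedN d M ∧ closedN (d+1) N
  | .bang _ M => closedN d M
  | .ann _ M => closedN d M
  | .insp ϑ => ∀ i, closedN d (ϑ i)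

mutual
  /-- Closed closures. -/
  def closedClo : Clo → Prop
    | .lamC M e => closedN (envLen e + 1) M ∧ closedEnv e
    | .bangC _ C => closedClo C
  /-- Closed values. -/
  def closedVal : Val → Prop
    | .mk _ C => closedClo C
  /-- Closed environments. -/
  def closedEnv : Env → Prop
    | .nil => True
    | .cons V e => closedVal V ∧ closedEnv e
end

/-- Machine codes: pure terms or fragments of abstract syntax tree. -/
inductive Code : Type
  | tm : NTm → Code
  | ap : Code
  | bg : Code
  | lt : NTm → Code
  | ins : Code

/-- Stack tuples `(q | κ | e)`. -/
structure Tup where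
  q : Tr
  κ : Code
  e : Env

instance : Inhabited Tup := ⟨⟨.r, .ap, .nil⟩⟩

/-- Stacks. -/
abbrev Stack := List Tup
/-- Dumps. -/
abbrev Dump := List Val
/-- Machine configurations. -/
abbrev Config := Stack × Dump

/-- The tuple for a pending inspection branch. -/
def brTup (x : Tr × NTm × Env) : Tup := ⟨x.1, .tm x.2.1, x.2.2⟩

mutual
  /-- Well-formed context configurations. -/
  inductive WfCtx : Stack → Dump → Prop
    | nil : WfCtx [] []
    | apTm {π D} (q q' M e) : WfCtx π D →
        WfCtx (⟨q, .tm M, e⟩ :: ⟨q', .ap, .nil⟩ :: π) D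
    | apVal {π D} (q V) : WfCtx π D → WfCtx (⟨q, .ap, .nil⟩ :: π) (V :: D)
    | lt {π D} (q M e) : WfCtx π D → WfCtx (⟨q, .lt M, e⟩ :: π) D
    | bg {π D} (q) : WfCtx π D → WfCtx (⟨q, .bg, .nil⟩ :: π) D
    | ins {π D} (q') (ts : List (Tr × NTm × Env)) (vs : List Val) :
        vs.length + ts.length = 8 → WfCtx π D →
        WfCtx (ts.map brTup ++ ⟨q', .ins, .nil⟩ :: π) (vs ++ D)
  /-- Well-formed term configurations. -/
  inductive WfTm : Stack → Dump → Prop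
    | fin (V) : WfTm [] [V]
    | tm {π D} (q M e) : WfCtx π D → WfTm (⟨q, .tm M, e⟩ :: π) D
    | ap {π D} (q V W) : WfCtx π D → WfTm (⟨q, .ap, .nil⟩ :: π) (W :: V :: D)
    | lt {π D} (q M e V) : WfCtx π D → WfTm (⟨q, .lt M, e⟩ :: π) (V :: D)
    | bg {π D} (q V) : WfCtx π D → WfTm (⟨q, .bg, .nil⟩ :: π) (V :: D)
    | ins {π D} (q) (vs : List Val) : vs.length = 9 → WfCtx π D →
        WfTm (⟨q, .ins, .nil⟩ :: π) (vs ++ D)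
end

/-- The term denoted by a pending-branch tuple. -/
def tupDen (x : Tr × NTm × Env) : Tm := .ann x.1 (.er (.sub (toTm x.2.1) (envToSub x.2.2)))

mutual
  /-- Denotation of context configurations as CAU⁻σ one-hole contexts. -/
  inductive CtxDen : Stack → Dump → (Tm → Tm) → Prop
    | nil : CtxDen [] [] id
    | apTm {π D E} (q q' M e) : CtxDen π D E →
        CtxDen (⟨q, .tm M, e⟩ :: ⟨q', .ap, .nil⟩ :: π) D
          (fun X => E (.ann q' (.ap X (.ann q (.er (.sub (toTm M) (envToSub e)))))))
    | apVal {π D E} (q V) : CtxDen π D E →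
        CtxDen (⟨q, .ap, .nil⟩ :: π) (V :: D) (fun X => E (.ann q (.ap (valToTm V) X)))
    | lt {π D E} (q N e) : CtxDen π D E →
        CtxDen (⟨q, .lt N, e⟩ :: π) D
          (fun X => E (.ann q (.lets X
            (.er (.sub (toTm N) (.cons .one (.comp (envToSub e) .sh)))))))
    | bg {π D E} (q) : CtxDen π D E →
        CtxDen (⟨q, .bg, .nil⟩ :: π) D (fun X => E (.ann q (.bang .r X)))
    | ins {π D E} (q') (ts : List (Tr × NTm × Env)) (vs : List Val) :
        vs.length + ts.length = 8 → CtxDen π D E →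
        CtxDen (ts.map brTup ++ ⟨q', .ins, .nil⟩ :: π) (vs ++ D)
          (fun X => E (.ann q' (.insp fun i =>
            if h : (i : ℕ) < vs.length then valToTm (vs.get ⟨i, h⟩)
            else if (i : ℕ) = vs.length then X
            else tupDen (ts.getD ((i : ℕ) - vs.length - 1) default))))
  /-- Denotation of term configurations as CAU⁻σ terms. -/
  inductive TmDen : Stack → Dump → Tm → Prop
    | fin (V) : TmDen [] [V] (valToTm V)
    | tm {π D E} (q M e) : CtxDen π D E →
        TmDen (⟨q, .tm M, e⟩ :: π) D (E (.ann q (.er (.sub (toTm M) (envToSub e)))))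
    | ap {π D E} (q V W) : CtxDen π D E →
        TmDen (⟨q, .ap, .nil⟩ :: π) (W :: V :: D) (E (.ann q (.ap (valToTm V) (valToTm W))))
    | lt {π D E} (q N e V) : CtxDen π D E →
        TmDen (⟨q, .lt N, e⟩ :: π) (V :: D)
          (E (.ann q (.lets (valToTm V)
            (.er (.sub (toTm N) (.cons .one (.comp (envToSub e) .sh)))))))
    | bg {π D E} (q V) : CtxDen π D E →
        TmDen (⟨q, .bg, .nil⟩ :: π) (V :: D) (E (.ann q (.bang .r (valToTm V))))
    | ins {π D E} (q) (vs : List Val) : vs.length = 9 → CtxDen π D E →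
        TmDen (⟨q, .ins, .nil⟩ :: π) (vs ++ D)
          (E (.ann q (.insp fun i => valToTm (vs.getD (i : ℕ) default))))
end

/-- The trail-collection operator `I(q_ϑ, π, D)` materializing the trail of the
enclosing bang for trail inspection. -/
inductive IRel (nfq : Tr → Tr) : Tr → Stack → Dump → Tr → Prop
  | bg {qθ π D} (q') : IRel nfq qθ (⟨q', .bg, .nil⟩ :: π) D (nfq qθ)
  | apTm {qθ π D res} (q q' M e) :
      IRel nfq (.t q' (.ap qθ q)) π D res →
      IRel nfq qθ (⟨q, .tm M, e⟩ :: ⟨q', .ap, .nil⟩ :: π) D res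
  | apVal {qθ π D res} (q q'' C) :
      IRel nfq (.t q (.ap q'' qθ)) π D res →
      IRel nfq qθ (⟨q, .ap, .nil⟩ :: π) (Val.mk q'' C :: D) res
  | lt {qθ π D res} (q N e) :
      IRel nfq (.t q (.lets qθ .r)) π D res →
      IRel nfq qθ (⟨q, .lt N, e⟩ :: π) D res
  | ins {qθ π D res} (q') (ts : List (Tr × NTm × Env)) (vs : List Val) :
      vs.length + ts.length = 8 →
      IRel nfq (.t q' (.tb fun i =>
          if h : (i : ℕ) < vs.length then (vs.get ⟨i, h⟩).tr
          else if (i : ℕ) = vs.length then qθ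
          else (ts.getD ((i : ℕ) - vs.length - 1) default).1)) π D res →
      IRel nfq qθ (ts.map brTup ++ ⟨q', .ins, .nil⟩ :: π) (vs ++ D) res

/-- The inspection trail of nine evaluated branches, as a term (de Bruijn encoding of
trail constructors as the dangling indices 1..9). -/
def tTT : Tr → NTm
  | .r => .var 0
  | .t q q' => .ap (.ap (.var 1) (tTT q)) (tTT q')
  | .pb => .var 2
  | .pbb => .var 3
  | .ti => .var 4
  | .lam q => .ap (.var 5) (tTT q)
  | .ap q q' => .ap (.ap (.var 6) (tTT q)) (tTT q')
  | .lets q q' => .ap (.ap (.var 7) (tTT q)) (tTT q')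
  | .tb ζ => (List.ofFn fun i => tTT (ζ i)).foldl .ap (.var 8)
  | .ext _ => .var 0

/-- The environment `[r ▷ C₁, …, r ▷ C₉]` of inspection branches. -/
def mkEnv (vs : List Val) : Env := vs.foldr (fun V e => .cons (.mk .r V.clo) e) .nil

/-- Transition relation of the call-by-value abstract machine. -/
inductive MStep (nfq : Tr → Tr) : Config → Config → Prop
  | r1 {π D} (q M N e) :
      MStep nfq (⟨q, .tm (.ap M N), e⟩ :: π, D)
        (⟨.r, .tm M, e⟩ :: ⟨.r, .tm N, e⟩ :: ⟨q, .ap, .nil⟩ :: π, D)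
  | r2 {π D} (q q' C q'' M e) :
      MStep nfq (⟨q, .ap, .nil⟩ :: π, Val.mk q' C :: Val.mk q'' (.lamC M e) :: D)
        (⟨.t q (.t (.ap q'' q') .pb), .tm M, .cons (.mk .r C) e⟩ :: π, D)
  | r3 {π D} (q M e) :
      MStep nfq (⟨q, .tm (.lam M), e⟩ :: π, D) (π, Val.mk q (.lamC M e) :: D)
  | r4 {π D} (q M N e) :
      MStep nfq (⟨q, .tm (.lets M N), e⟩ :: π, D)
        (⟨.r, .tm M, e⟩ :: ⟨q, .lt N, e⟩ :: π, D)
  | r5 {π D} (q N e q' V) :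
      MStep nfq (⟨q, .lt N, e⟩ :: π, Val.mk q' (.bangC V.tr V.clo) :: D)
        (⟨.t q (.t (.lets q' .r) (.t .pbb
            (.ext (.sub (.er (.sub (toTm N) (.cons .one (.comp (envToSub e) .sh))))
              (.cons (valToTm V) .id))))),
          .tm N, .cons V e⟩ :: π, D)
  | r6 {π D} (q q' M e) :
      MStep nfq (⟨q, .tm (.bang q' M), e⟩ :: π, D)
        (⟨.t (toTr q') (.ext (.sub (toTm M) (envToSub e))), .tm M, e⟩ :: ⟨q, .bg, .nil⟩ :: π, D)
  | r7 {π D} (q V) :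
      MStep nfq (⟨q, .bg, .nil⟩ :: π, V :: D) (π, Val.mk q (.bangC V.tr V.clo) :: D)
  | r8 {π D} (q ϑ e) :
      MStep nfq (⟨q, .tm (.insp ϑ), e⟩ :: π, D)
        ((List.ofFn fun i : Fin 9 => Tup.mk .r (.tm (ϑ i)) e) ++ ⟨q, .ins, .nil⟩ :: π, D)
  | r9 {π D} (q) (vs : List Val) (qres : Tr) :
      vs.length = 9 →
      IRel nfq (.t q (.tb fun i => (vs.getD (i : ℕ) default).tr)) π D qres →
      MStep nfq (⟨q, .ins, .nil⟩ :: π, vs ++ D)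
        (⟨.t q (.t (.tb fun i => (vs.getD (i : ℕ) default).tr) .ti),
          .tm (tTT qres), mkEnv vs⟩ :: π, D)
  | r10 {π D} (q n e C) :
      lookupE e n = some C →
      MStep nfq (⟨q, .tm (.var n), e⟩ :: π, D) (π, Val.mk q C :: D)

/-- Closedness conditions on stack tuples. -/
def TupClosed : Tup → Prop
  | ⟨_, .tm M, e⟩ => closedN (envLen e) M ∧ closedEnv e
  | ⟨_, .lt N, e⟩ => closedN (envLen e + 1) N ∧ closedEnv e
  | ⟨_, _, e⟩ => closedEnv e

/-- Valid machine states: well-formed term configurations whose tuples and dump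
values are closed. -/
def Valid (ς : Config) : Prop :=
  WfTm ς.1 ς.2 ∧ (∀ t ∈ ς.1, TupClosed t) ∧ (∀ V ∈ ς.2, closedVal V)

end CAU

namespace CAU

/-! ### Part 1: a sound τ-normalizer on trails -/

/-- size of a trail -/
def sz : Tr → ℕ
  | .r => 1 | .pb => 1 | .pbb => 1 | .ti => 1
  | .lam a => sz a + 1
  | .ap a b => sz a + sz b + 1
  | .lets a b => sz a + sz b + 1
  | .t a b => sz a + sz b + 1
  | .tb ζ => (List.ofFn fun i => sz (ζ i)).sum + 1
  | .ext _ => 1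

lemma sz_pos (q : Tr) : 0 < sz q := by
  cases q <;> simp [sz]

lemma sz_lt_tb (ζ : Fin 9 → Tr) (i : Fin 9) : sz (ζ i) < sz (.tb ζ) := by
  have h1 : sz (ζ i) ∈ (List.ofFn fun j => sz (ζ j)) := by
    rw [List.mem_ofFn]
    exact Set.mem_range_self i
  have h2 := List.single_le_sum (l := List.ofFn fun j => sz (ζ j))
    (fun x _ => Nat.zero_le x) _ h1
  show sz (ζ i) < (List.ofFn fun j => sz (ζ j)).sum + 1
  omega

/-- head-constructor tag -/
def tag : Tr → ℕ
  | .r => 0 | .ext _ => 1 | .pb => 2 | .pbb => 3 | .ti => 4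
  | .lam _ => 5 | .ap _ _ => 6 | .lets _ _ => 7 | .tb _ => 8 | .t _ _ => 9

/-- factor: neither `r` nor a composition -/
def Fact (a : Tr) : Prop := tag a ≠ 0 ∧ tag a ≠ 9

/-- fusable heads -/
def Fus (a b : Tr) : Prop := tag a = tag b ∧ 5 ≤ tag a ∧ tag a ≤ 8

/-- first factor of a chain -/
def hd : Tr → Tr
  | .t a _ => a
  | x => x

def sLam : Tr → Tr
  | .r => .r
  | a => .lam a

def sAp : Tr → Tr → Tr
  | .r, .r => .r
  | a, b => .ap a b

def sLets : Tr → Tr → Tr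
  | .r, .r => .r
  | a, b => .lets a b

open Classical in
noncomputable def sTb (ζ : Fin 9 → Tr) : Tr :=
  if (∀ i, ζ i = .r) then .r else .tb ζ

mutual
  /-- normalized composition of trails -/
  noncomputable def comp : Tr → Tr → Tr
    | .r, y => y
    | .t a as, y => scons a (comp as y)
    | x, y => scons x y
  termination_by x y => 3 * sz x + 2
  decreasing_by
    all_goals simp_wf
    all_goals first
      | omega
      | (simp [sz]; omega)
      | (have := sz_lt_tb ζ i; simp [sz] at this ⊢; omega)
      | (simp [sz] <;> (have := sz_pos ‹_›; omega))
  /-- fused cons of a factor onto a normalized chain -/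
  noncomputable def scons (a : Tr) : Tr → Tr
    | .r => a
    | .t b bs =>
        match fuse a b with
        | some c => .t c bs
        | none => .t a (.t b bs)
    | b =>
        match fuse a b with
        | some c => c
        | none => .t a b
  termination_by z => 3 * sz a + 1
  decreasing_by
    all_goals simp_wf
    all_goals first
      | omega
      | (simp [sz]; omega)
      | (have := sz_lt_tb ζ i; simp [sz] at this ⊢; omega)
      | (simp [sz]; have := sz_pos ‹_›; omega)
  /-- fusion of two factors with equal heads -/
  noncomputable def fuse : Tr → Tr → Option Tr
    | .lam x, .lam y => some (.lam (comp x y))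
    | .ap x₁ x₂, .ap y₁ y₂ => some (sAp (comp x₁ y₁) (comp x₂ y₂))
    | .lets x₁ x₂, .lets y₁ y₂ => some (sLets (comp x₁ y₁) (comp x₂ y₂))
    | .tb ζ, .tb η => some (sTb fun i => comp (ζ i) (η i))
    | _, _ => none
  termination_by a b => 3 * sz a
  decreasing_by
    all_goals simp_wf
    all_goals first
      | omega
      | (simp [sz]; omega)
      | (have := sz_lt_tb ζ i; simp [sz] at this ⊢; omega)
      | (simp [sz]; have := sz_pos ‹_›; omega)
end

end CAU
namespace CAU

/-- well-formed (τ-normal, ext-free) trails -/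
def WFQ : Tr → Prop
  | .r => True | .pb => True | .pbb => True | .ti => True
  | .lam a => WFQ a ∧ a ≠ .r
  | .ap a b => WFQ a ∧ WFQ b ∧ ¬(a = .r ∧ b = .r)
  | .lets a b => WFQ a ∧ WFQ b ∧ ¬(a = .r ∧ b = .r)
  | .tb ζ => (∀ i, WFQ (ζ i)) ∧ ¬(∀ i, ζ i = .r)
  | .t a b => WFQ a ∧ WFQ b ∧ Fact a ∧ b ≠ .r ∧ ¬Fus a (hd b)
  | .ext _ => False

lemma fus_tag {a b : Tr} (h : Fus a b) : tag a = tag b := h.1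

lemma fuse_some_fus {a b c : Tr} (h : fuse a b = some c) : Fus a b := by
  cases a <;> cases b <;> simp [fuse] at h <;> simp [Fus, tag]

lemma fuse_none_of_not_fus {a b : Tr} (h : ¬Fus a b) : fuse a b = none := by
  cases a <;> cases b <;> simp [fuse] <;> exact h (by simp [Fus, tag])

lemma fuse_isSome_of_fus {a b : Tr} (h : Fus a b) : ∃ c, fuse a b = some c := by
  cases a <;> cases b <;> simp [Fus, tag] at h <;> simp [fuse] <;> omega

lemma sAp_eq {x y : Tr} (h : ¬(x = .r ∧ y = .r)) : sAp x y = .ap x y := by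
  cases x <;> cases y <;> simp [sAp] <;> simp at h

lemma sLets_eq {x y : Tr} (h : ¬(x = .r ∧ y = .r)) : sLets x y = .lets x y := by
  cases x <;> cases y <;> simp [sLets] <;> simp at h

lemma sLam_eq {x : Tr} (h : x ≠ .r) : sLam x = .lam x := by
  cases x <;> simp [sLam] <;> simp at h

lemma sTb_eq {f : Fin 9 → Tr} (h : ¬(∀ i, f i = .r)) : sTb f = .tb f := by
  simp [sTb, h]

lemma sTb_eq_r {f : Fin 9 → Tr} (h : ∀ i, f i = .r) : sTb f = .r := by
  simp [sTb, h]

lemma comp_of_factor {x : Tr} (h : Fact x) (y : Tr) : comp x y = scons x y := by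
  cases x <;> simp [comp] <;> simp [Fact, tag] at h

lemma scons_of_not_fus {a z : Tr} (h : ¬Fus a (hd z)) (hz : z ≠ .r) :
    scons a z = .t a z := by
  cases z <;> simp [hd] at h hz ⊢ <;>
    simp [scons, fuse_none_of_not_fus h]

lemma scons_t_some {a b bs c : Tr} (h : fuse a b = some c) :
    scons a (.t b bs) = .t c bs := by simp [scons, h]

lemma scons_factor_some {a b c : Tr} (h : fuse a b = some c) (hb : Fact b) :
    scons a b = c := by
  cases b <;> simp [scons, h] <;> simp [Fact, tag] at hb <;>
    simp [fuse] at h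

end CAU
namespace CAU

lemma fact_ne_r {a : Tr} (h : Fact a) : a ≠ .r := by
  cases a <;> simp [Fact, tag] at h ⊢

lemma fact_ne_t {a : Tr} (h : Fact a) : ∀ x y, a ≠ .t x y := by
  cases a <;> simp [Fact, tag] at h ⊢

lemma hd_factor {a : Tr} (h : Fact a) : hd a = a := by
  cases a <;> simp [hd] <;> simp [Fact, tag] at h

lemma fuse_none_not_fus {a b : Tr} (h : fuse a b = none) : ¬Fus a b := by
  intro hf
  obtain ⟨c, hc⟩ := fuse_isSome_of_fus hf
  rw [h] at hc; cases hc

lemma fus_congr_left {c b w : Tr} (h : tag c = tag b) : Fus c w ↔ Fus b w := by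
  simp [Fus, h]

lemma fact_of_fus_tag {c a b : Tr} (htag : tag c = tag a) (hf : Fus a b) : Fact c := by
  obtain ⟨h1, h2, h3⟩ := hf
  constructor <;> omega

lemma scons_t_none {a b bs : Tr} (h : fuse a b = none) :
    scons a (.t b bs) = .t a (.t b bs) := by simp [scons, h]


private theorem wfne_aux : ∀ n : ℕ,
    (∀ a b c : Tr, sz a ≤ n → Fact a → WFQ a → Fact b → WFQ b →
      fuse a b = some c → WFQ c ∧ c ≠ .r ∧ tag c = tag a) ∧
    (∀ a b : Tr, sz a ≤ n → Fact a → WFQ a → Fact b → WFQ b →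
      WFQ (scons a b) ∧ scons a b ≠ .r) ∧
    (∀ a z : Tr, sz a ≤ n → Fact a → WFQ a → WFQ z →
      WFQ (scons a z) ∧ scons a z ≠ .r) ∧
    (∀ x y : Tr, sz x ≤ n → WFQ x → WFQ y →
      WFQ (comp x y) ∧ (comp x y = .r → x = .r ∧ y = .r)) := by
  intro n
  induction n using Nat.strong_induction_on with
  | _ n IH =>
  have Hc : ∀ x y : Tr, sz x < n → WFQ x → WFQ y →
      WFQ (comp x y) ∧ (comp x y = .r → x = .r ∧ y = .r) :=
    fun x y hlt hx hy => (IH (sz x) hlt).2.2.2 x y le_rfl hx hy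
  have hfuse : ∀ a b c : Tr, sz a ≤ n → Fact a → WFQ a → Fact b → WFQ b →
      fuse a b = some c → WFQ c ∧ c ≠ .r ∧ tag c = tag a := by
    intro a b c hsz hfa ha hfb hb hfu
    cases a <;> cases b <;> simp [fuse] at hfu
    case lam.lam x y =>
        obtain ⟨hx, hxr⟩ := ha
        obtain ⟨hy, hyr⟩ := hb
        have h1 := Hc x y (by simp [sz] at hsz ⊢; omega) hx hy
        have hne : comp x y ≠ .r := fun h => hxr (h1.2 h).1
        subst hfu
        exact ⟨⟨h1.1, hne⟩, by simp, rfl⟩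
    case ap.ap x₁ x₂ y₁ y₂ =>
        obtain ⟨hx₁, hx₂, hnx⟩ := ha
        obtain ⟨hy₁, hy₂, hny⟩ := hb
        have h1 := Hc x₁ y₁ (by simp [sz] at hsz ⊢; omega) hx₁ hy₁
        have h2 := Hc x₂ y₂ (by simp [sz] at hsz ⊢; omega) hx₂ hy₂
        have hnb : ¬(comp x₁ y₁ = .r ∧ comp x₂ y₂ = .r) := by
          rintro ⟨e1, e2⟩
          exact hnx ⟨(h1.2 e1).1, (h2.2 e2).1⟩
        rw [sAp_eq hnb] at hfu
        subst hfu
        exact ⟨⟨h1.1, h2.1, hnb⟩, by simp, rfl⟩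
    case lets.lets x₁ x₂ y₁ y₂ =>
        obtain ⟨hx₁, hx₂, hnx⟩ := ha
        obtain ⟨hy₁, hy₂, hny⟩ := hb
        have h1 := Hc x₁ y₁ (by simp [sz] at hsz ⊢; omega) hx₁ hy₁
        have h2 := Hc x₂ y₂ (by simp [sz] at hsz ⊢; omega) hx₂ hy₂
        have hnb : ¬(comp x₁ y₁ = .r ∧ comp x₂ y₂ = .r) := by
          rintro ⟨e1, e2⟩
          exact hnx ⟨(h1.2 e1).1, (h2.2 e2).1⟩
        rw [sLets_eq hnb] at hfu
        subst hfu
        exact ⟨⟨h1.1, h2.1, hnb⟩, by simp, rfl⟩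
    case tb.tb ζ η =>
        obtain ⟨hζ, hnζ⟩ := ha
        obtain ⟨hη, hnη⟩ := hb
        have h1 : ∀ i, WFQ (comp (ζ i) (η i)) ∧
            (comp (ζ i) (η i) = .r → ζ i = .r ∧ η i = .r) :=
          fun i => Hc (ζ i) (η i) (lt_of_lt_of_le (sz_lt_tb ζ i) hsz) (hζ i) (hη i)
        have hne : ¬(∀ i, comp (ζ i) (η i) = .r) := by
          intro h
          exact hnζ (fun i => ((h1 i).2 (h i)).1)
        rw [sTb_eq hne] at hfu
        subst hfu
        exact ⟨⟨fun i => (h1 i).1, hne⟩, by simp, rfl⟩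
  have hsconsF : ∀ a b : Tr, sz a ≤ n → Fact a → WFQ a → Fact b → WFQ b →
      WFQ (scons a b) ∧ scons a b ≠ .r := by
    intro a b hsz hfa ha hfb hb
    cases hfu : fuse a b with
    | none =>
        rw [scons_of_not_fus (by rw [hd_factor hfb]; exact fuse_none_not_fus hfu)
          (fact_ne_r hfb)]
        refine ⟨⟨ha, hb, hfa, fact_ne_r hfb, ?_⟩, by simp⟩
        rw [hd_factor hfb]; exact fuse_none_not_fus hfu
    | some c =>
        have hw := hfuse a b c hsz hfa ha hfb hb hfu
        rw [scons_factor_some hfu hfb]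
        exact ⟨hw.1, hw.2.1⟩
  have hscons : ∀ a z : Tr, sz a ≤ n → Fact a → WFQ a → WFQ z →
      WFQ (scons a z) ∧ scons a z ≠ .r := by
    intro a z hsz hfa ha hz
    cases z with
    | r =>
        rw [show scons a Tr.r = a by simp [scons]]
        exact ⟨ha, fact_ne_r hfa⟩
    | t b bs =>
        obtain ⟨hb, hbs, hfb, hbsr, hnfb⟩ := hz
        cases hfu : fuse a b with
        | none =>
            rw [scons_t_none hfu]
            refine ⟨⟨ha, ⟨hb, hbs, hfb, hbsr, hnfb⟩, hfa, by simp, ?_⟩, by simp⟩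
            simpa [hd] using fuse_none_not_fus hfu
        | some c =>
            have hw := hfuse a b c hsz hfa ha hfb hb hfu
            rw [scons_t_some hfu]
            refine ⟨⟨hw.1, hbs, ?_, hbsr, ?_⟩, by simp⟩
            · exact fact_of_fus_tag hw.2.2 (fuse_some_fus hfu)
            · rw [fus_congr_left (hw.2.2.trans (fuse_some_fus hfu).1)]
              exact hnfb
    | ext M => exact hz.elim
    | _ => exact hsconsF a _ hsz hfa ha (by simp [Fact, tag]) hz
  refine ⟨hfuse, hsconsF, hscons, ?_⟩
  intro x y hsz hx hy
  cases x with
  | r =>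
      rw [show comp Tr.r y = y by simp [comp]]
      exact ⟨hy, fun h => ⟨rfl, h⟩⟩
  | t a as =>
      obtain ⟨ha, has, hfa, hasr, hnf⟩ := hx
      have h1 := Hc as y (by simp [sz] at hsz ⊢; omega) has hy
      have h2 := hscons a (comp as y) (by simp [sz] at hsz ⊢; omega) hfa ha h1.1
      rw [show comp (.t a as) y = scons a (comp as y) by simp [comp]]
      exact ⟨h2.1, fun h => absurd h h2.2⟩
  | ext M => exact hx.elim
  | _ =>
      rw [comp_of_factor (by simp [Fact, tag])]
      have h2 := hscons _ y hsz (by simp [Fact, tag]) hx hy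
      exact ⟨h2.1, fun h => absurd h h2.2⟩

theorem comp_wf_ne (x y : Tr) (hx : WFQ x) (hy : WFQ y) :
    WFQ (comp x y) ∧ (comp x y = .r → x = .r ∧ y = .r) :=
  (wfne_aux (sz x)).2.2.2 x y le_rfl hx hy

theorem fuse_wf (a b c : Tr) (hfa : Fact a) (ha : WFQ a) (hfb : Fact b) (hb : WFQ b)
    (hfu : fuse a b = some c) : WFQ c ∧ c ≠ .r ∧ tag c = tag a :=
  (wfne_aux (sz a)).1 a b c le_rfl hfa ha hfb hb hfu

theorem scons_wf_ne (a z : Tr) (hfa : Fact a) (ha : WFQ a) (hz : WFQ z) :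
    WFQ (scons a z) ∧ scons a z ≠ .r :=
  (wfne_aux (sz a)).2.2.1 a z le_rfl hfa ha hz

lemma comp_wf {x y : Tr} (hx : WFQ x) (hy : WFQ y) : WFQ (comp x y) :=
  (comp_wf_ne x y hx hy).1

lemma comp_eq_r {x y : Tr} (hx : WFQ x) (hy : WFQ y) (h : comp x y = .r) :
    x = .r ∧ y = .r := (comp_wf_ne x y hx hy).2 h

lemma comp_r_left (y : Tr) : comp .r y = y := by simp [comp]

theorem comp_r_right : ∀ x : Tr, WFQ x → comp x .r = x := by
  intro x hx
  cases x with
  | r => simp [comp]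
  | t a as =>
      obtain ⟨ha, has, hfa, hasr, hnf⟩ := hx
      rw [show comp (.t a as) .r = scons a (comp as .r) by simp [comp],
        comp_r_right as has, scons_of_not_fus hnf hasr]
  | ext M => exact hx.elim
  | _ => rw [comp_of_factor (by simp [Fact, tag])]; simp [scons]

end CAU
namespace CAU

private theorem assoc_aux : ∀ n : ℕ,
    (∀ a b d c e : Tr, sz a ≤ n → Fact a → WFQ a → Fact b → WFQ b → Fact d → WFQ d →
      fuse a b = some c → fuse b d = some e → fuse a e = fuse c d) ∧
    (∀ a b z c : Tr, sz a ≤ n → Fact a → WFQ a → Fact b → WFQ b → WFQ z →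
      fuse a b = some c → scons a (scons b z) = scons c z) ∧
    (∀ a w z : Tr, sz a ≤ n → Fact a → WFQ a → WFQ w → WFQ z →
      comp (scons a w) z = scons a (comp w z)) ∧
    (∀ x y z : Tr, sz x ≤ n → WFQ x → WFQ y → WFQ z →
      comp (comp x y) z = comp x (comp y z)) := by
  intro n
  induction n using Nat.strong_induction_on with
  | _ n IH =>
  have Has : ∀ x y z : Tr, sz x < n → WFQ x → WFQ y → WFQ z →
      comp (comp x y) z = comp x (comp y z) :=
    fun x y z hlt hx hy hz => (IH (sz x) hlt).2.2.2 x y z le_rfl hx hy hz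
  have hA3 : ∀ a b d c e : Tr, sz a ≤ n → Fact a → WFQ a → Fact b → WFQ b →
      Fact d → WFQ d → fuse a b = some c → fuse b d = some e →
      fuse a e = fuse c d := by
    intro a b d c e hsz hfa ha hfb hb hfd hd' hab hbd
    cases a <;> cases b <;> simp [fuse] at hab
    case lam.lam a₁ b₁ =>
        cases d <;> simp [fuse] at hbd
        case lam d₁ =>
          obtain ⟨ha₁, har⟩ := ha
          obtain ⟨hb₁, hbr⟩ := hb
          obtain ⟨hd₁, hdr⟩ := hd'
          subst hab; subst hbd
          simp only [fuse, Option.some.injEq, Tr.lam.injEq]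
          exact (Has a₁ b₁ d₁ (by simp [sz] at hsz ⊢; omega) ha₁ hb₁ hd₁).symm
    case ap.ap a₁ a₂ b₁ b₂ =>
        cases d <;> simp [fuse] at hbd
        case ap d₁ d₂ =>
          obtain ⟨ha₁, ha₂, hna⟩ := ha
          obtain ⟨hb₁, hb₂, hnb⟩ := hb
          obtain ⟨hd₁, hd₂, hnd⟩ := hd'
          have e1 : ¬(comp a₁ b₁ = .r ∧ comp a₂ b₂ = .r) := by
            rintro ⟨u, v⟩
            exact hna ⟨(comp_eq_r ha₁ hb₁ u).1, (comp_eq_r ha₂ hb₂ v).1⟩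
          have e2 : ¬(comp b₁ d₁ = .r ∧ comp b₂ d₂ = .r) := by
            rintro ⟨u, v⟩
            exact hnb ⟨(comp_eq_r hb₁ hd₁ u).1, (comp_eq_r hb₂ hd₂ v).1⟩
          rw [sAp_eq e1] at hab
          rw [sAp_eq e2] at hbd
          subst hab; subst hbd
          simp only [fuse, Option.some.injEq]
          rw [Has a₁ b₁ d₁ (by simp [sz] at hsz ⊢; omega) ha₁ hb₁ hd₁,
            Has a₂ b₂ d₂ (by simp [sz] at hsz ⊢; omega) ha₂ hb₂ hd₂]
    case lets.lets a₁ a₂ b₁ b₂ =>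
        cases d <;> simp [fuse] at hbd
        case lets d₁ d₂ =>
          obtain ⟨ha₁, ha₂, hna⟩ := ha
          obtain ⟨hb₁, hb₂, hnb⟩ := hb
          obtain ⟨hd₁, hd₂, hnd⟩ := hd'
          have e1 : ¬(comp a₁ b₁ = .r ∧ comp a₂ b₂ = .r) := by
            rintro ⟨u, v⟩
            exact hna ⟨(comp_eq_r ha₁ hb₁ u).1, (comp_eq_r ha₂ hb₂ v).1⟩
          have e2 : ¬(comp b₁ d₁ = .r ∧ comp b₂ d₂ = .r) := by
            rintro ⟨u, v⟩
            exact hnb ⟨(comp_eq_r hb₁ hd₁ u).1, (comp_eq_r hb₂ hd₂ v).1⟩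
          rw [sLets_eq e1] at hab
          rw [sLets_eq e2] at hbd
          subst hab; subst hbd
          simp only [fuse, Option.some.injEq]
          rw [Has a₁ b₁ d₁ (by simp [sz] at hsz ⊢; omega) ha₁ hb₁ hd₁,
            Has a₂ b₂ d₂ (by simp [sz] at hsz ⊢; omega) ha₂ hb₂ hd₂]
    case tb.tb ζa ζb =>
        cases d <;> simp [fuse] at hbd
        case tb ζd =>
          obtain ⟨hζa, hna⟩ := ha
          obtain ⟨hζb, hnb⟩ := hb
          obtain ⟨hζd, hnd⟩ := hd'
          have e1 : ¬(∀ i, comp (ζa i) (ζb i) = .r) := by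
            intro h
            exact hna fun i => (comp_eq_r (hζa i) (hζb i) (h i)).1
          have e2 : ¬(∀ i, comp (ζb i) (ζd i) = .r) := by
            intro h
            exact hnb fun i => (comp_eq_r (hζb i) (hζd i) (h i)).1
          rw [sTb_eq e1] at hab
          rw [sTb_eq e2] at hbd
          subst hab; subst hbd
          simp only [fuse, Option.some.injEq]
          congr 1
          funext i
          exact (Has (ζa i) (ζb i) (ζd i) (lt_of_lt_of_le (sz_lt_tb ζa i) hsz)
            (hζa i) (hζb i) (hζd i)).symm
  have hA2F : ∀ a b d c : Tr, sz a ≤ n → Fact a → WFQ a → Fact b → WFQ b →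
      Fact d → WFQ d → fuse a b = some c → scons a (scons b d) = scons c d := by
    intro a b d c hsz hfa ha hfb hb hfd hd' hab
    have hfusab := fuse_some_fus hab
    have hwc := fuse_wf a b c hfa ha hfb hb hab
    have htcb : tag c = tag b := hwc.2.2.trans hfusab.1
    cases hbd : fuse b d with
    | some e =>
        have hwe := fuse_wf b d e hfb hb hfd hd' hbd
        have hfe : Fact e := fact_of_fus_tag hwe.2.2 (fuse_some_fus hbd)
        have h3 := hA3 a b d c e hsz hfa ha hfb hb hfd hd' hab hbd
        have hfuscd : Fus c d := by
          rw [fus_congr_left htcb]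
          exact fuse_some_fus hbd
        obtain ⟨g, hg⟩ := fuse_isSome_of_fus hfuscd
        rw [scons_factor_some hbd hfd, scons_factor_some (h3.trans hg) hfe,
          scons_factor_some hg hfd]
    | none =>
        have hncd : fuse c d = none := by
          apply fuse_none_of_not_fus
          rw [fus_congr_left htcb]
          exact fuse_none_not_fus hbd
        rw [scons_of_not_fus (by rw [hd_factor hfd]; exact fuse_none_not_fus hbd)
            (fact_ne_r hfd),
          scons_t_some hab,
          scons_of_not_fus (by rw [hd_factor hfd]; exact fuse_none_not_fus hncd)
            (fact_ne_r hfd)]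
  have hA2 : ∀ a b z c : Tr, sz a ≤ n → Fact a → WFQ a → Fact b → WFQ b → WFQ z →
      fuse a b = some c → scons a (scons b z) = scons c z := by
    intro a b z c hsz hfa ha hfb hb hz hab
    have hfusab := fuse_some_fus hab
    have hwc := fuse_wf a b c hfa ha hfb hb hab
    have htcb : tag c = tag b := hwc.2.2.trans hfusab.1
    cases z with
    | r =>
        rw [show scons b Tr.r = b by simp [scons],
          show scons c Tr.r = c by simp [scons], scons_factor_some hab hfb]
    | t d ds =>
        obtain ⟨hd', hds, hfd, hdsr, hnfd⟩ := hz
        cases hbd : fuse b d with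
        | some e =>
            have hwe := fuse_wf b d e hfb hb hfd hd' hbd
            have h3 := hA3 a b d c e hsz hfa ha hfb hb hfd hd' hab hbd
            have hfuscd : Fus c d := by
              rw [fus_congr_left htcb]
              exact fuse_some_fus hbd
            obtain ⟨g, hg⟩ := fuse_isSome_of_fus hfuscd
            rw [scons_t_some hbd, scons_t_some (h3.trans hg), scons_t_some hg]
        | none =>
            have hncd : fuse c d = none := by
              apply fuse_none_of_not_fus
              rw [fus_congr_left htcb]
              exact fuse_none_not_fus hbd
            rw [scons_t_none hbd, scons_t_some hab, scons_t_none hncd]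
    | ext M => exact hz.elim
    | _ => exact hA2F a b _ c hsz hfa ha hfb hb (by simp [Fact, tag]) hz hab
  have hA1F : ∀ a b z : Tr, sz a ≤ n → Fact a → WFQ a → Fact b → WFQ b → WFQ z →
      comp (scons a b) z = scons a (comp b z) := by
    intro a b z hsz hfa ha hfb hb hz
    cases hab : fuse a b with
    | some c =>
        have hwc := fuse_wf a b c hfa ha hfb hb hab
        have hfc : Fact c := fact_of_fus_tag hwc.2.2 (fuse_some_fus hab)
        rw [scons_factor_some hab hfb, comp_of_factor hfc, comp_of_factor hfb,
          hA2 a b z c hsz hfa ha hfb hb hz hab]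
    | none =>
        rw [scons_of_not_fus (by rw [hd_factor hfb]; exact fuse_none_not_fus hab)
            (fact_ne_r hfb),
          show comp (Tr.t a b) z = scons a (comp b z) by simp [comp],
          comp_of_factor hfb]
  have hA1 : ∀ a w z : Tr, sz a ≤ n → Fact a → WFQ a → WFQ w → WFQ z →
      comp (scons a w) z = scons a (comp w z) := by
    intro a w z hsz hfa ha hw hz
    cases w with
    | r =>
        rw [show scons a Tr.r = a by simp [scons], comp_of_factor hfa,
          show comp Tr.r z = z by simp [comp]]
    | t b bs =>
        obtain ⟨hb, hbs, hfb, hbsr, hnfb⟩ := hw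
        cases hab : fuse a b with
        | some c =>
            rw [scons_t_some hab,
              show comp (Tr.t c bs) z = scons c (comp bs z) by simp [comp],
              show comp (Tr.t b bs) z = scons b (comp bs z) by simp [comp],
              hA2 a b (comp bs z) c hsz hfa ha hfb hb (comp_wf hbs hz) hab]
        | none =>
            rw [scons_t_none hab,
              show comp (Tr.t a (Tr.t b bs)) z = scons a (comp (Tr.t b bs) z) by
                simp [comp]]
    | ext M => exact hw.elim
    | _ => exact hA1F a _ z hsz hfa ha (by simp [Fact, tag]) hw hz
  have HF : ∀ x y z : Tr, sz x ≤ n → Fact x → WFQ x → WFQ y → WFQ z →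
      comp (comp x y) z = comp x (comp y z) := by
    intro x y z hsz hfx hx hy hz
    rw [comp_of_factor hfx y, comp_of_factor hfx (comp y z),
      hA1 x y z hsz hfx hx hy hz]
  refine ⟨hA3, hA2, hA1, ?_⟩
  intro x y z hsz hx hy hz
  cases x with
  | r =>
      rw [show comp Tr.r y = y by simp [comp], show comp Tr.r (comp y z) = comp y z by
        simp [comp]]
  | t a as =>
      obtain ⟨ha, has, hfa, hasr, hnf⟩ := hx
      rw [show comp (Tr.t a as) y = scons a (comp as y) by simp [comp],
        hA1 a (comp as y) z (by simp [sz] at hsz ⊢; omega) hfa ha (comp_wf has hy) hz,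
        Has as y z (by simp [sz] at hsz ⊢; omega) has hy hz,
        show comp (Tr.t a as) (comp y z) = scons a (comp as (comp y z)) by simp [comp]]
  | ext M => exact hx.elim
  | _ => exact HF _ y z hsz (by simp [Fact, tag]) hx hy hz

theorem comp_assoc {x y z : Tr} (hx : WFQ x) (hy : WFQ y) (hz : WFQ z) :
    comp (comp x y) z = comp x (comp y z) :=
  (assoc_aux (sz x)).2.2.2 x y z le_rfl hx hy hz

end CAU
namespace CAU

lemma wfq_sLam {a : Tr} (ha : WFQ a) : WFQ (sLam a) := by
  by_cases h : a = Tr.r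
  · subst h; simp [sLam, WFQ]
  · rw [sLam_eq h]; exact ⟨ha, h⟩

lemma wfq_sAp {a b : Tr} (ha : WFQ a) (hb : WFQ b) : WFQ (sAp a b) := by
  by_cases h : a = Tr.r ∧ b = Tr.r
  · obtain ⟨h1, h2⟩ := h; subst h1; subst h2; simp [sAp, WFQ]
  · rw [sAp_eq h]; exact ⟨ha, hb, h⟩

lemma wfq_sLets {a b : Tr} (ha : WFQ a) (hb : WFQ b) : WFQ (sLets a b) := by
  by_cases h : a = Tr.r ∧ b = Tr.r
  · obtain ⟨h1, h2⟩ := h; subst h1; subst h2; simp [sLets, WFQ]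
  · rw [sLets_eq h]; exact ⟨ha, hb, h⟩

lemma wfq_sTb {f : Fin 9 → Tr} (hf : ∀ i, WFQ (f i)) : WFQ (sTb f) := by
  by_cases h : ∀ i, f i = Tr.r
  · rw [sTb_eq_r h]; simp [WFQ]
  · rw [sTb_eq h]; exact ⟨hf, h⟩

lemma comp_sLam {a b : Tr} (ha : WFQ a) (hb : WFQ b) :
    comp (sLam a) (sLam b) = sLam (comp a b) := by
  by_cases h : a = Tr.r
  · subst h
    rw [show sLam Tr.r = Tr.r from rfl, comp_r_left, comp_r_left]
  · rw [sLam_eq h]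
    by_cases h2 : b = Tr.r
    · subst h2
      rw [show sLam Tr.r = Tr.r from rfl, comp_r_right (Tr.lam a) ⟨ha, h⟩, comp_r_right _ ha,
        sLam_eq h]
    · rw [sLam_eq h2, comp_of_factor (by simp [Fact, tag]),
        scons_factor_some (show fuse (Tr.lam a) (Tr.lam b) =
          some (Tr.lam (comp a b)) by simp [fuse]) (by simp [Fact, tag]),
        sLam_eq (fun hc => h (comp_eq_r ha hb hc).1)]

lemma comp_sAp {a₁ a₂ b₁ b₂ : Tr} (ha₁ : WFQ a₁) (ha₂ : WFQ a₂)
    (hb₁ : WFQ b₁) (hb₂ : WFQ b₂) :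
    comp (sAp a₁ a₂) (sAp b₁ b₂) = sAp (comp a₁ b₁) (comp a₂ b₂) := by
  by_cases h : a₁ = Tr.r ∧ a₂ = Tr.r
  · obtain ⟨h1, h2⟩ := h; subst h1; subst h2
    rw [show sAp Tr.r Tr.r = Tr.r from rfl, comp_r_left, comp_r_left, comp_r_left]
  · rw [sAp_eq h]
    by_cases h2 : b₁ = Tr.r ∧ b₂ = Tr.r
    · obtain ⟨e1, e2⟩ := h2; subst e1; subst e2
      rw [show sAp Tr.r Tr.r = Tr.r from rfl, comp_r_right (Tr.ap a₁ a₂) ⟨ha₁, ha₂, h⟩,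
        comp_r_right _ ha₁, comp_r_right _ ha₂, sAp_eq h]
    · rw [sAp_eq h2, comp_of_factor (by simp [Fact, tag]),
        scons_factor_some (show fuse (Tr.ap a₁ a₂) (Tr.ap b₁ b₂) =
          some (sAp (comp a₁ b₁) (comp a₂ b₂)) by simp [fuse]) (by simp [Fact, tag])]

lemma comp_sLets {a₁ a₂ b₁ b₂ : Tr} (ha₁ : WFQ a₁) (ha₂ : WFQ a₂)
    (hb₁ : WFQ b₁) (hb₂ : WFQ b₂) :
    comp (sLets a₁ a₂) (sLets b₁ b₂) = sLets (comp a₁ b₁) (comp a₂ b₂) := by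
  by_cases h : a₁ = Tr.r ∧ a₂ = Tr.r
  · obtain ⟨h1, h2⟩ := h; subst h1; subst h2
    rw [show sLets Tr.r Tr.r = Tr.r from rfl, comp_r_left, comp_r_left, comp_r_left]
  · rw [sLets_eq h]
    by_cases h2 : b₁ = Tr.r ∧ b₂ = Tr.r
    · obtain ⟨e1, e2⟩ := h2; subst e1; subst e2
      rw [show sLets Tr.r Tr.r = Tr.r from rfl, comp_r_right (Tr.lets a₁ a₂) ⟨ha₁, ha₂, h⟩,
        comp_r_right _ ha₁, comp_r_right _ ha₂, sLets_eq h]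
    · rw [sLets_eq h2, comp_of_factor (by simp [Fact, tag]),
        scons_factor_some (show fuse (Tr.lets a₁ a₂) (Tr.lets b₁ b₂) =
          some (sLets (comp a₁ b₁) (comp a₂ b₂)) by simp [fuse]) (by simp [Fact, tag])]

lemma comp_sTb {f g : Fin 9 → Tr} (hf : ∀ i, WFQ (f i)) (hg : ∀ i, WFQ (g i)) :
    comp (sTb f) (sTb g) = sTb (fun i => comp (f i) (g i)) := by
  by_cases h : ∀ i, f i = Tr.r
  · rw [sTb_eq_r h, comp_r_left,
      show (fun i => comp (f i) (g i)) = g from funext fun i => by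
        rw [h i, comp_r_left]]
  · rw [sTb_eq h]
    by_cases h2 : ∀ i, g i = Tr.r
    · rw [sTb_eq_r h2, comp_r_right (Tr.tb f) ⟨hf, h⟩,
        show (fun i => comp (f i) (g i)) = f from funext fun i => by
          rw [h2 i, comp_r_right _ (hf i)], sTb_eq h]
    · rw [sTb_eq h2, comp_of_factor (by simp [Fact, tag]),
        scons_factor_some (show fuse (Tr.tb f) (Tr.tb g) =
          some (sTb fun i => comp (f i) (g i)) by simp [fuse]) (by simp [Fact, tag])]

/-- the τ-normalization function on trails (explicit extractions mapped to `r`) -/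
noncomputable def phi : Tr → Tr
  | .r => .r | .pb => .pb | .pbb => .pbb | .ti => .ti
  | .lam a => sLam (phi a)
  | .ap a b => sAp (phi a) (phi b)
  | .lets a b => sLets (phi a) (phi b)
  | .tb ζ => sTb (fun i => phi (ζ i))
  | .t a b => comp (phi a) (phi b)
  | .ext _ => .r

private theorem phi_wf_aux : ∀ n : ℕ, ∀ q : Tr, sz q ≤ n → WFQ (phi q) := by
  intro n
  induction n using Nat.strong_induction_on with
  | _ n IH =>
  intro q hsz
  have H : ∀ x : Tr, sz x < sz q → WFQ (phi x) :=
    fun x hlt => IH (sz x) (lt_of_lt_of_le hlt hsz) x le_rfl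
  cases q with
  | r => simp [phi, WFQ]
  | pb => simp [phi, WFQ]
  | pbb => simp [phi, WFQ]
  | ti => simp [phi, WFQ]
  | ext M => simp [phi, WFQ]
  | lam a => rw [phi]; exact wfq_sLam (H a (by simp only [sz]; omega))
  | ap a b =>
      rw [phi]
      exact wfq_sAp (H a (by simp only [sz]; omega)) (H b (by simp only [sz]; omega))
  | lets a b =>
      rw [phi]
      exact wfq_sLets (H a (by simp only [sz]; omega)) (H b (by simp only [sz]; omega))
  | tb ζ =>
      rw [phi]
      exact wfq_sTb (fun i => H (ζ i) (sz_lt_tb ζ i))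
  | t a b =>
      rw [phi]
      exact comp_wf (H a (by simp only [sz]; omega)) (H b (by simp only [sz]; omega))

theorem phi_wf (q : Tr) : WFQ (phi q) := phi_wf_aux (sz q) q le_rfl

private theorem phi_id_aux : ∀ n : ℕ, ∀ q : Tr, sz q ≤ n → WFQ q → phi q = q := by
  intro n
  induction n using Nat.strong_induction_on with
  | _ n IH =>
  intro q hsz hq
  have H : ∀ x : Tr, sz x < sz q → WFQ x → phi x = x :=
    fun x hlt => IH (sz x) (lt_of_lt_of_le hlt hsz) x le_rfl
  cases q with
  | r => simp [phi]
  | pb => simp [phi]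
  | pbb => simp [phi]
  | ti => simp [phi]
  | ext M => exact hq.elim
  | lam a =>
      obtain ⟨ha, har⟩ := hq
      rw [phi, H a (by simp only [sz]; omega) ha, sLam_eq har]
  | ap a b =>
      obtain ⟨ha, hb, hn⟩ := hq
      rw [phi, H a (by simp only [sz]; omega) ha, H b (by simp only [sz]; omega) hb, sAp_eq hn]
  | lets a b =>
      obtain ⟨ha, hb, hn⟩ := hq
      rw [phi, H a (by simp only [sz]; omega) ha, H b (by simp only [sz]; omega) hb, sLets_eq hn]
  | tb ζ =>
      obtain ⟨hζ, hn⟩ := hq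
      rw [phi, show (fun i => phi (ζ i)) = ζ from
        funext fun i => H (ζ i) (sz_lt_tb ζ i) (hζ i), sTb_eq hn]
  | t a b =>
      obtain ⟨ha, hb, hfa, hbr, hnf⟩ := hq
      rw [phi, H a (by simp only [sz]; omega) ha, H b (by simp only [sz]; omega) hb,
        comp_of_factor hfa, scons_of_not_fus hnf hbr]

theorem phi_id {q : Tr} (hq : WFQ q) : phi q = q := phi_id_aux (sz q) q le_rfl hq

end CAU
namespace CAU

def isAnn : Tm → Prop
  | .ann _ _ => True
  | _ => False

/-- inversion lemmas for normal terms -/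
lemma nt_lam {M : Tm} (h : NormalT (.lam M)) : NormalT M :=
  fun _ hs => h _ (.lamC hs)
lemma nt_apL {M N : Tm} (h : NormalT (.ap M N)) : NormalT M :=
  fun _ hs => h _ (.apL N hs)
lemma nt_apR {M N : Tm} (h : NormalT (.ap M N)) : NormalT N :=
  fun _ hs => h _ (.apR M hs)
lemma nt_letsL {M N : Tm} (h : NormalT (.lets M N)) : NormalT M :=
  fun _ hs => h _ (.letsL N hs)
lemma nt_letsR {M N : Tm} (h : NormalT (.lets M N)) : NormalT N :=
  fun _ hs => h _ (.letsR M hs)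
lemma nt_bangQ {q : Tr} {M : Tm} (h : NormalT (.bang q M)) : NormalQ q :=
  fun _ hs => h _ (.bangQ M hs)
lemma nt_bangM {q : Tr} {M : Tm} (h : NormalT (.bang q M)) : NormalT M :=
  fun _ hs => h _ (.bangM q hs)
lemma nt_annQ {q : Tr} {M : Tm} (h : NormalT (.ann q M)) : NormalQ q :=
  fun _ hs => h _ (.annQ M hs)
lemma nt_annM {q : Tr} {M : Tm} (h : NormalT (.ann q M)) : NormalT M :=
  fun _ hs => h _ (.annM q hs)
lemma nt_insp {ϑ : Fin 9 → Tm} (h : NormalT (.insp ϑ)) (i : Fin 9) : NormalT (ϑ i) :=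
  fun _ hs => h _ (.inspC i hs)
lemma nt_subM {M : Tm} {s : Sb} (h : NormalT (.sub M s)) : NormalT M :=
  fun _ hs => h _ (.subM s hs)
lemma nt_subS {M : Tm} {s : Sb} (h : NormalT (.sub M s)) : NormalS s :=
  fun _ hs => h _ (.subS M hs)
lemma nt_erC {M : Tm} (h : NormalT (.er M)) : NormalT M :=
  fun _ hs => h _ (.erC hs)

lemma nt_lam_na {M : Tm} (h : NormalT (.lam M)) : ¬isAnn M := by
  cases M <;> simp [isAnn]
  exact h _ (.lamAnn _ _)
lemma nt_apL_na {M N : Tm} (h : NormalT (.ap M N)) : ¬isAnn M := by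
  cases M <;> simp [isAnn]
  exact h _ (.apAnnL _ _ _)
lemma nt_apR_na {M N : Tm} (h : NormalT (.ap M N)) : ¬isAnn N := by
  cases N <;> simp [isAnn]
  exact h _ (.apAnnR _ _ _)
lemma nt_letsL_na {M N : Tm} (h : NormalT (.lets M N)) : ¬isAnn M := by
  cases M <;> simp [isAnn]
  exact h _ (.letsAnnL _ _ _)
lemma nt_letsR_na {M N : Tm} (h : NormalT (.lets M N)) : ¬isAnn N := by
  cases N <;> simp [isAnn]
  exact h _ (.letsAnnR _ _ _)
lemma nt_bang_na {q : Tr} {M : Tm} (h : NormalT (.bang q M)) : ¬isAnn M := by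
  cases M <;> simp [isAnn]
  exact h _ (.bangAnn _ _ _)
lemma nt_ann_na {q : Tr} {M : Tm} (h : NormalT (.ann q M)) : ¬isAnn M := by
  cases M <;> simp [isAnn]
  exact h _ (.annAnn _ _ _)
lemma nt_insp_na {ϑ : Fin 9 → Tm} (h : NormalT (.insp ϑ)) (i : Fin 9) : ¬isAnn (ϑ i) := by
  intro ha
  cases hM : ϑ i <;> rw [hM] at ha <;> simp [isAnn] at ha
  exact h _ (.inspAnn ϑ i _ _ hM)

lemma normal_comp_shape : ∀ n : ℕ, ∀ s₁ s₂ : Sb, sizeOf s₂ ≤ n →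
    NormalS (.comp s₁ s₂) → ∃ k, Sb.comp s₁ s₂ = pow (k + 1) := by
  intro n
  induction n using Nat.strong_induction_on with
  | _ n IH =>
  intro s₁ s₂ hsz hn
  cases s₁ with
  | id => exact absurd (StepS.idComp s₂) (hn s₂)
  | cons M s => exact absurd (StepS.consComp M s s₂) (hn _)
  | comp a b => exact absurd (StepS.compAssoc a b s₂) (hn _)
  | sh =>
      cases s₂ with
      | id => exact absurd StepS.shId (hn _)
      | cons M s => exact absurd (StepS.shCons M s) (hn _)
      | sh => exact ⟨0, rfl⟩
      | comp a b =>
          have hn2 : NormalS (.comp a b) := fun t ht => hn _ (.compR _ ht)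
          obtain ⟨k, hk⟩ := IH (sizeOf b)
            (by simp at hsz; omega) a b le_rfl hn2
          exact ⟨k + 1, by rw [hk]; rfl⟩

private theorem er_sub_aux : ∀ n : ℕ,
    (∀ M : Tm, sizeOf M ≤ n → ¬ NormalT (.er M)) ∧
    (∀ (M : Tm) (s : Sb), sizeOf M ≤ n → NormalT (.sub M s) →
      M = .one ∧ ∃ k, s = pow k) := by
  intro n
  induction n using Nat.strong_induction_on with
  | _ n IH =>
  have hsub : ∀ (M : Tm) (s : Sb), sizeOf M ≤ n → NormalT (.sub M s) →
      M = .one ∧ ∃ k, s = pow k := by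
    intro M s hsz hn
    cases M with
    | one =>
        refine ⟨rfl, ?_⟩
        cases s with
        | id => exact absurd (StepT.subOneId) (hn _)
        | cons N t => exact absurd (StepT.subOneCons N t) (hn _)
        | sh => exact ⟨0, rfl⟩
        | comp a b =>
            obtain ⟨k, hk⟩ := normal_comp_shape (sizeOf b) a b le_rfl (nt_subS hn)
            exact ⟨k + 1, hk⟩
    | lam M => exact absurd (StepT.subLam M s) (hn _)
    | ap M N => exact absurd (StepT.subAp M N s) (hn _)
    | lets M N => exact absurd (StepT.subLets M N s) (hn _)
    | bang q M => exact absurd (StepT.subBang q M s) (hn _)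
    | ann q M => exact absurd (StepT.subAnn q M s) (hn _)
    | insp ϑ => exact absurd (StepT.subInsp ϑ s) (hn _)
    | sub M t => exact absurd (StepT.subSub M t s) (hn _)
    | er M =>
        exfalso
        have : NormalT (.er M) := fun X hX => hn _ (.subM s hX)
        exact (IH (sizeOf M) (by simp at hsz ⊢; omega)).1 M le_rfl this
  refine ⟨?_, hsub⟩
  intro M hsz hn
  cases M with
  | one => exact hn _ .erOne
  | lam M => exact hn _ (.erLam M)
  | ap M N => exact hn _ (.erAp M N)
  | lets M N => exact hn _ (.erLets M N)
  | bang q M => exact hn _ (.erBang q M)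
  | ann q M => exact hn _ (.erAnn q M)
  | insp ϑ => exact hn _ (.erInsp ϑ)
  | er M =>
      have : NormalT (.er M) := fun X hX => hn _ (.erC hX)
      exact (IH (sizeOf M) (by simp at hsz ⊢; omega)).1 M le_rfl this
  | sub M s =>
      obtain ⟨hM, k, hk⟩ := hsub M s (by simp at hsz ⊢; omega) (nt_erC hn)
      subst hM; subst hk
      exact hn _ (.erOneSh k)

theorem er_not_normal (M : Tm) : ¬ NormalT (.er M) :=
  (er_sub_aux (sizeOf M)).1 M le_rfl

theorem sub_normal_shape {M : Tm} {s : Sb} (hn : NormalT (.sub M s)) :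
    M = .one ∧ ∃ k, s = pow k :=
  (er_sub_aux (sizeOf M)).2 M s le_rfl hn

theorem ext_step {M : Tm} (hn : NormalT M) (hna : ¬isAnn M) :
    ∃ q', StepQ (.ext M) q' := by
  cases M with
  | one => exact ⟨_, .extOne⟩
  | lam M => exact ⟨_, .extLam M⟩
  | ap M N => exact ⟨_, .extAp M N⟩
  | lets M N => exact ⟨_, .extLets M N⟩
  | bang q M => exact ⟨_, .extBang q M⟩
  | ann q M => exact absurd trivial hna
  | insp ϑ => exact ⟨_, .extInsp ϑ⟩
  | er M => exact absurd hn (er_not_normal M)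
  | sub M s =>
      obtain ⟨hM, k, hk⟩ := sub_normal_shape hn
      subst hM; subst hk
      exact ⟨_, .extOneSh k⟩

end CAU
namespace CAU

/-- Good trails: every explicit extraction has a normal, non-annotation argument. -/
def GoodQ : Tr → Prop
  | .r => True | .pb => True | .pbb => True | .ti => True
  | .lam a => GoodQ a
  | .ap a b => GoodQ a ∧ GoodQ b
  | .lets a b => GoodQ a ∧ GoodQ b
  | .t a b => GoodQ a ∧ GoodQ b
  | .tb ζ => ∀ i, GoodQ (ζ i)
  | .ext M => NormalT M ∧ ¬isAnn M

private theorem stepq_phi_aux : ∀ n : ℕ, ∀ q q' : Tr, sz q ≤ n → StepQ q q' →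
    GoodQ q → phi q = phi q' ∧ GoodQ q' := by
  intro n
  induction n using Nat.strong_induction_on with
  | _ n IH =>
  intro q q' hsz h hg
  have H : ∀ x x' : Tr, sz x < sz q → StepQ x x' → GoodQ x →
      phi x = phi x' ∧ GoodQ x' :=
    fun x x' hlt => IH (sz x) (lt_of_lt_of_le hlt hsz) x x' le_rfl
  cases h with
  | extOne => exact ⟨rfl, trivial⟩
  | extOneSh k => exact ⟨rfl, trivial⟩
  | extLam M =>
      obtain ⟨h1, h2⟩ := hg
      refine ⟨by simp [phi, sLam], nt_lam h1, nt_lam_na h1⟩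
  | extAp M N =>
      obtain ⟨h1, h2⟩ := hg
      exact ⟨by simp [phi, sAp], ⟨nt_apL h1, nt_apL_na h1⟩, nt_apR h1, nt_apR_na h1⟩
  | extBang q M => exact ⟨rfl, trivial⟩
  | extLets M N =>
      obtain ⟨h1, h2⟩ := hg
      exact ⟨by simp [phi, sLets], ⟨nt_letsL h1, nt_letsL_na h1⟩,
        nt_letsR h1, nt_letsR_na h1⟩
  | extAnn q M =>
      obtain ⟨h1, h2⟩ := hg
      exact absurd trivial h2
  | extInsp ϑ =>
      obtain ⟨h1, h2⟩ := hg
      refine ⟨?_, fun i => ⟨nt_insp h1 i, nt_insp_na h1 i⟩⟩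
      simp only [phi]
      rw [sTb_eq_r (fun i => rfl)]
  | extC hs =>
      obtain ⟨h1, h2⟩ := hg
      exact absurd hs (h1 _)
  | tReflR a =>
      exact ⟨by simp only [phi]; exact comp_r_right _ (phi_wf _), hg.1⟩
  | tReflL a =>
      exact ⟨by simp only [phi]; exact comp_r_left (phi _), hg.2⟩
  | tbRefl =>
      exact ⟨by simp only [phi]; rw [sTb_eq_r (fun i => rfl)], trivial⟩
  | apRefl => exact ⟨rfl, trivial⟩
  | lamRefl => exact ⟨rfl, trivial⟩
  | letsRefl => exact ⟨rfl, trivial⟩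
  | tAssoc q₁ q₂ q₃ =>
      obtain ⟨⟨g1, g2⟩, g3⟩ := hg
      refine ⟨?_, g1, g2, g3⟩
      simp only [phi]
      exact comp_assoc (phi_wf q₁) (phi_wf q₂) (phi_wf q₃)
  | tLam q q' =>
      obtain ⟨g1, g2⟩ := hg
      exact ⟨by simp only [phi]; exact comp_sLam (phi_wf q) (phi_wf q'), g1, g2⟩
  | tLamT q₁ q₁' q =>
      obtain ⟨g1, g2, g3⟩ := hg
      refine ⟨?_, ⟨g1, g2⟩, g3⟩
      simp only [phi]
      rw [← comp_assoc (wfq_sLam (phi_wf q₁)) (wfq_sLam (phi_wf q₁')) (phi_wf q),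
        comp_sLam (phi_wf q₁) (phi_wf q₁')]
  | tAp q₁ q₂ q₁' q₂' =>
      obtain ⟨⟨g1, g2⟩, g3, g4⟩ := hg
      refine ⟨?_, ⟨g1, g3⟩, g2, g4⟩
      simp only [phi]
      exact comp_sAp (phi_wf q₁) (phi_wf q₂) (phi_wf q₁') (phi_wf q₂')
  | tApT q₁ q₂ q₁' q₂' q =>
      obtain ⟨⟨g1, g2⟩, ⟨g3, g4⟩, g5⟩ := hg
      refine ⟨?_, ⟨⟨g1, g3⟩, g2, g4⟩, g5⟩
      simp only [phi]
      rw [← comp_assoc (wfq_sAp (phi_wf q₁) (phi_wf q₂))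
          (wfq_sAp (phi_wf q₁') (phi_wf q₂')) (phi_wf q),
        comp_sAp (phi_wf q₁) (phi_wf q₂) (phi_wf q₁') (phi_wf q₂')]
  | tLets q₁ q₂ q₁' q₂' =>
      obtain ⟨⟨g1, g2⟩, g3, g4⟩ := hg
      refine ⟨?_, ⟨g1, g3⟩, g2, g4⟩
      simp only [phi]
      exact comp_sLets (phi_wf q₁) (phi_wf q₂) (phi_wf q₁') (phi_wf q₂')
  | tLetsT q₁ q₂ q₁' q₂' q =>
      obtain ⟨⟨g1, g2⟩, ⟨g3, g4⟩, g5⟩ := hg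
      refine ⟨?_, ⟨⟨g1, g3⟩, g2, g4⟩, g5⟩
      simp only [phi]
      rw [← comp_assoc (wfq_sLets (phi_wf q₁) (phi_wf q₂))
          (wfq_sLets (phi_wf q₁') (phi_wf q₂')) (phi_wf q),
        comp_sLets (phi_wf q₁) (phi_wf q₂) (phi_wf q₁') (phi_wf q₂')]
  | tTb ζ₁ ζ₂ =>
      obtain ⟨g1, g2⟩ := hg
      refine ⟨?_, fun i => ⟨g1 i, g2 i⟩⟩
      simp only [phi]
      exact comp_sTb (fun i => phi_wf (ζ₁ i)) (fun i => phi_wf (ζ₂ i))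
  | tTbT ζ₁ ζ₂ q =>
      obtain ⟨g1, g2, g3⟩ := hg
      refine ⟨?_, fun i => ⟨g1 i, g2 i⟩, g3⟩
      simp only [phi]
      rw [← comp_assoc (wfq_sTb (fun i => phi_wf (ζ₁ i)))
          (wfq_sTb (fun i => phi_wf (ζ₂ i))) (phi_wf q),
        comp_sTb (fun i => phi_wf (ζ₁ i)) (fun i => phi_wf (ζ₂ i))]
  | tL q' hs =>
      obtain ⟨g1, g2⟩ := hg
      obtain ⟨e, g⟩ := H _ _ (by simp only [sz]; omega) hs g1
      exact ⟨by simp only [phi]; rw [e], g, g2⟩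
  | tR q hs =>
      obtain ⟨g1, g2⟩ := hg
      obtain ⟨e, g⟩ := H _ _ (by simp only [sz]; omega) hs g2
      exact ⟨by simp only [phi]; rw [e], g1, g⟩
  | lamC hs =>
      obtain ⟨e, g⟩ := H _ _ (by simp only [sz]; omega) hs hg
      exact ⟨by simp only [phi]; rw [e], g⟩
  | apL q' hs =>
      obtain ⟨g1, g2⟩ := hg
      obtain ⟨e, g⟩ := H _ _ (by simp only [sz]; omega) hs g1
      exact ⟨by simp only [phi]; rw [e], g, g2⟩
  | apR q hs =>
      obtain ⟨g1, g2⟩ := hg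
      obtain ⟨e, g⟩ := H _ _ (by simp only [sz]; omega) hs g2
      exact ⟨by simp only [phi]; rw [e], g1, g⟩
  | letsL q' hs =>
      obtain ⟨g1, g2⟩ := hg
      obtain ⟨e, g⟩ := H _ _ (by simp only [sz]; omega) hs g1
      exact ⟨by simp only [phi]; rw [e], g, g2⟩
  | letsR q hs =>
      obtain ⟨g1, g2⟩ := hg
      obtain ⟨e, g⟩ := H _ _ (by simp only [sz]; omega) hs g2
      exact ⟨by simp only [phi]; rw [e], g1, g⟩
  | tbC i hs =>
      rename_i ζ q''
      obtain ⟨e, g⟩ := H _ _ (sz_lt_tb _ i) hs (hg i)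
      constructor
      · simp only [phi]
        congr 1
        funext j
        by_cases hji : j = i
        · subst hji; rw [Function.update_self, e]
        · rw [Function.update_of_ne hji]
      · intro j
        by_cases hji : j = i
        · subst hji; rw [Function.update_self]; exact g
        · rw [Function.update_of_ne hji]; exact hg j

theorem stepq_phi {q q' : Tr} (h : StepQ q q') (hg : GoodQ q) :
    phi q = phi q' ∧ GoodQ q' :=
  stepq_phi_aux (sz q) q q' le_rfl h hg

theorem rtg_stepq_phi {q q' : Tr} (h : Relation.ReflTransGen StepQ q q')
    (hg : GoodQ q) : phi q = phi q' ∧ GoodQ q' := by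
  induction h with
  | refl => exact ⟨rfl, hg⟩
  | tail _ hstep ih =>
      obtain ⟨e, g⟩ := ih
      obtain ⟨e2, g2⟩ := stepq_phi hstep g
      exact ⟨e.trans e2, g2⟩

end CAU
namespace CAU

lemma rtg_update {α β : Type*} (F : (Fin 9 → α) → β) {R : α → α → Prop}
    {S : β → β → Prop}
    (hc : ∀ (ζ : Fin 9 → α) (i : Fin 9) (x' : α), R (ζ i) x' →
      S (F ζ) (F (Function.update ζ i x')))
    {ζ η : Fin 9 → α} (h : ∀ i, Relation.ReflTransGen R (ζ i) (η i)) :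
    Relation.ReflTransGen S (F ζ) (F η) := by
  have one : ∀ (ζ : Fin 9 → α) (i : Fin 9) (b : α), Relation.ReflTransGen R (ζ i) b →
      Relation.ReflTransGen S (F ζ) (F (Function.update ζ i b)) := by
    intro ζ i b hb
    induction hb with
    | refl => rw [Function.update_eq_self]
    | tail h1 h2 ih =>
        rename_i mid c
        refine ih.tail ?_
        have := hc (Function.update ζ i mid) i c (by rwa [Function.update_self])
        rwa [Function.update_idem] at this
  have main : ∀ l : List (Fin 9), l.Nodup →
      Relation.ReflTransGen S (F ζ) (F (fun i => if i ∈ l then η i else ζ i)) := by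
    intro l hl
    induction l with
    | nil => exact .refl
    | cons j l ih =>
        obtain ⟨hj, hnd⟩ := List.nodup_cons.mp hl
        have base := ih hnd
        have he : (fun i => if i ∈ j :: l then η i else ζ i)
            = Function.update (fun i => if i ∈ l then η i else ζ i) j (η j) := by
          funext i
          by_cases hij : i = j
          · subst hij; simp [Function.update_self, hj]
          · simp [Function.update_of_ne hij, List.mem_cons, hij]
        rw [he]
        refine base.trans (one _ j (η j) ?_)
        simp only [hj, if_neg]
        exact h j
  have := main (List.finRange 9) (List.nodup_finRange 9)
  simpa [List.mem_finRange] using this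

/-- size of terms, counting through inspections -/
def szT : Tm → ℕ
  | .one => 1
  | .sub M _ => szT M + 1
  | .bang _ M => szT M + 1
  | .lam M => szT M + 1
  | .ap M N => szT M + szT N + 1
  | .lets M N => szT M + szT N + 1
  | .ann _ M => szT M + 1
  | .er M => szT M + 1
  | .insp ϑ => (List.ofFn fun i => szT (ϑ i)).sum + 1

lemma szT_lt_insp (ϑ : Fin 9 → Tm) (i : Fin 9) : szT (ϑ i) < szT (.insp ϑ) := by
  have h1 : szT (ϑ i) ∈ (List.ofFn fun j => szT (ϑ j)) := by
    rw [List.mem_ofFn]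
    exact Set.mem_range_self i
  have h2 := List.single_le_sum (l := List.ofFn fun j => szT (ϑ j))
    (fun x _ => Nat.zero_le x) _ h1
  show szT (ϑ i) < (List.ofFn fun j => szT (ϑ j)).sum + 1
  omega

private theorem ext_red_aux : ∀ n : ℕ, ∀ M : Tm, szT M ≤ n → NormalT M → ¬isAnn M →
    Relation.ReflTransGen StepQ (.ext M) .r := by
  intro n
  induction n using Nat.strong_induction_on with
  | _ n IH =>
  intro M hsz hn hna
  have H : ∀ M' : Tm, szT M' < szT M → NormalT M' → ¬isAnn M' →
      Relation.ReflTransGen StepQ (.ext M') .r :=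
    fun M' hlt => IH (szT M') (lt_of_lt_of_le hlt hsz) M' le_rfl
  cases M with
  | one => exact .single .extOne
  | bang q M => exact .single (.extBang q M)
  | ann q M => exact absurd trivial hna
  | er M => exact absurd hn (er_not_normal M)
  | sub M s =>
      obtain ⟨hM, k, hk⟩ := sub_normal_shape hn
      subst hM; subst hk
      exact .single (.extOneSh k)
  | lam M =>
      refine .head (.extLam M) (Relation.ReflTransGen.tail ?_ .lamRefl)
      exact (H M (by simp only [szT]; omega) (nt_lam hn) (nt_lam_na hn)).lift
        (fun x => Tr.lam x) (fun a b hab => .lamC hab)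
  | ap M N =>
      refine .head (.extAp M N) ?_
      have h1 := ((H M (by simp only [szT]; omega) (nt_apL hn) (nt_apL_na hn)).lift
        (fun x => Tr.ap x (.ext N)) (fun a b hab => StepQ.apL _ hab))
      have h2 := ((H N (by simp only [szT]; omega) (nt_apR hn) (nt_apR_na hn)).lift
        (fun x => Tr.ap .r x) (fun a b hab => StepQ.apR _ hab))
      exact (h1.trans h2).tail .apRefl
  | lets M N =>
      refine .head (.extLets M N) ?_
      have h1 := ((H M (by simp only [szT]; omega) (nt_letsL hn) (nt_letsL_na hn)).lift
        (fun x => Tr.lets x (.ext N)) (fun a b hab => StepQ.letsL _ hab))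
      have h2 := ((H N (by simp only [szT]; omega) (nt_letsR hn) (nt_letsR_na hn)).lift
        (fun x => Tr.lets .r x) (fun a b hab => StepQ.letsR _ hab))
      exact (h1.trans h2).tail .letsRefl
  | insp ϑ =>
      refine .head (.extInsp ϑ) (Relation.ReflTransGen.tail ?_ .tbRefl)
      exact rtg_update (fun ζ => Tr.tb ζ) (fun ζ i x' hs => .tbC i hs)
        (fun i => H (ϑ i) (szT_lt_insp ϑ i) (nt_insp hn i) (nt_insp_na hn i))

theorem ext_red {M : Tm} (hn : NormalT M) (hna : ¬isAnn M) :
    Relation.ReflTransGen StepQ (.ext M) .r :=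
  ext_red_aux (szT M) M le_rfl hn hna

private theorem er_red_aux : ∀ n : ℕ, ∀ M : Tm, szT M ≤ n → NormalT M → ¬isAnn M →
    Relation.ReflTransGen StepT (.er M) M := by
  intro n
  induction n using Nat.strong_induction_on with
  | _ n IH =>
  intro M hsz hn hna
  have H : ∀ M' : Tm, szT M' < szT M → NormalT M' → ¬isAnn M' →
      Relation.ReflTransGen StepT (.er M') M' :=
    fun M' hlt => IH (szT M') (lt_of_lt_of_le hlt hsz) M' le_rfl
  cases M with
  | one => exact .single .erOne
  | bang q M => exact .single (.erBang q M)
  | ann q M => exact absurd trivial hna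
  | er M => exact absurd hn (er_not_normal M)
  | sub M s =>
      obtain ⟨hM, k, hk⟩ := sub_normal_shape hn
      subst hM; subst hk
      exact .single (.erOneSh k)
  | lam M =>
      refine .head (.erLam M) ?_
      exact (H M (by simp only [szT]; omega) (nt_lam hn) (nt_lam_na hn)).lift
        (fun x => Tm.lam x) (fun a b hab => .lamC hab)
  | ap M N =>
      refine .head (.erAp M N) ?_
      have h1 := ((H M (by simp only [szT]; omega) (nt_apL hn) (nt_apL_na hn)).lift
        (fun x => Tm.ap x (.er N)) (fun a b hab => StepT.apL _ hab))
      have h2 := ((H N (by simp only [szT]; omega) (nt_apR hn) (nt_apR_na hn)).lift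
        (fun x => Tm.ap M x) (fun a b hab => StepT.apR _ hab))
      exact h1.trans h2
  | lets M N =>
      refine .head (.erLets M N) ?_
      have h1 := ((H M (by simp only [szT]; omega) (nt_letsL hn) (nt_letsL_na hn)).lift
        (fun x => Tm.lets x (.er N)) (fun a b hab => StepT.letsL _ hab))
      have h2 := ((H N (by simp only [szT]; omega) (nt_letsR hn) (nt_letsR_na hn)).lift
        (fun x => Tm.lets M x) (fun a b hab => StepT.letsR _ hab))
      exact h1.trans h2
  | insp ϑ =>
      refine .head (.erInsp ϑ) ?_
      exact rtg_update (fun ζ => Tm.insp ζ) (fun ζ i x' hs => .inspC i hs)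
        (fun i => H (ϑ i) (szT_lt_insp ϑ i) (nt_insp hn i) (nt_insp_na hn i))

theorem er_red {M : Tm} (hn : NormalT M) (hna : ¬isAnn M) :
    Relation.ReflTransGen StepT (.er M) M :=
  er_red_aux (szT M) M le_rfl hn hna

/-- inversion lemmas for normal trails -/
lemma nq_tL {a b : Tr} (h : NormalQ (.t a b)) : NormalQ a :=
  fun _ hs => h _ (.tL _ hs)
lemma nq_tR {a b : Tr} (h : NormalQ (.t a b)) : NormalQ b :=
  fun _ hs => h _ (.tR _ hs)
lemma nq_lam {a : Tr} (h : NormalQ (.lam a)) : NormalQ a :=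
  fun _ hs => h _ (.lamC hs)
lemma nq_apL {a b : Tr} (h : NormalQ (.ap a b)) : NormalQ a :=
  fun _ hs => h _ (.apL _ hs)
lemma nq_apR {a b : Tr} (h : NormalQ (.ap a b)) : NormalQ b :=
  fun _ hs => h _ (.apR _ hs)
lemma nq_letsL {a b : Tr} (h : NormalQ (.lets a b)) : NormalQ a :=
  fun _ hs => h _ (.letsL _ hs)
lemma nq_letsR {a b : Tr} (h : NormalQ (.lets a b)) : NormalQ b :=
  fun _ hs => h _ (.letsR _ hs)
lemma nq_tb {ζ : Fin 9 → Tr} (h : NormalQ (.tb ζ)) (i : Fin 9) : NormalQ (ζ i) :=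
  fun _ hs => h _ (.tbC i hs)
lemma nq_ext {M : Tm} (h : NormalQ (.ext M)) : NormalT M :=
  fun _ hs => h _ (.extC hs)
lemma nq_ext_na {M : Tm} (h : NormalQ (.ext M)) : ¬isAnn M := by
  intro ha
  cases M <;> simp [isAnn] at ha
  exact h _ (.extAnn _ _)

private theorem good_of_normal_aux : ∀ n : ℕ, ∀ q : Tr, sz q ≤ n → NormalQ q →
    GoodQ q := by
  intro n
  induction n using Nat.strong_induction_on with
  | _ n IH =>
  intro q hsz hn
  have H : ∀ x : Tr, sz x < sz q → NormalQ x → GoodQ x :=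
    fun x hlt => IH (sz x) (lt_of_lt_of_le hlt hsz) x le_rfl
  cases q with
  | r => trivial
  | pb => trivial
  | pbb => trivial
  | ti => trivial
  | lam a => exact H a (by simp only [sz]; omega) (nq_lam hn)
  | ap a b =>
      exact ⟨H a (by simp only [sz]; omega) (nq_apL hn),
        H b (by simp only [sz]; omega) (nq_apR hn)⟩
  | lets a b =>
      exact ⟨H a (by simp only [sz]; omega) (nq_letsL hn),
        H b (by simp only [sz]; omega) (nq_letsR hn)⟩
  | t a b =>
      exact ⟨H a (by simp only [sz]; omega) (nq_tL hn),
        H b (by simp only [sz]; omega) (nq_tR hn)⟩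
  | tb ζ => exact fun i => H (ζ i) (sz_lt_tb ζ i) (nq_tb hn i)
  | ext M => exact ⟨nq_ext hn, nq_ext_na hn⟩

theorem good_of_normal {q : Tr} (hn : NormalQ q) : GoodQ q :=
  good_of_normal_aux (sz q) q le_rfl hn

lemma norm_not_fus {a b : Tr} (hn : NormalQ (.t a b)) : ¬Fus a (hd b) := by
  rintro ⟨ht, h5, h8⟩
  cases a with
  | lam a₁ =>
      cases b with
      | lam b₁ => exact hn _ (.tLam a₁ b₁)
      | t b₀ bs =>
          cases b₀ with
          | lam b₁ => exact hn _ (.tLamT a₁ b₁ bs)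
          | _ => simp [tag, hd] at ht
      | _ => simp [tag, hd] at ht
  | ap a₁ a₂ =>
      cases b with
      | ap b₁ b₂ => exact hn _ (.tAp a₁ a₂ b₁ b₂)
      | t b₀ bs =>
          cases b₀ with
          | ap b₁ b₂ => exact hn _ (.tApT a₁ a₂ b₁ b₂ bs)
          | _ => simp [tag, hd] at ht
      | _ => simp [tag, hd] at ht
  | lets a₁ a₂ =>
      cases b with
      | lets b₁ b₂ => exact hn _ (.tLets a₁ a₂ b₁ b₂)
      | t b₀ bs =>
          cases b₀ with
          | lets b₁ b₂ => exact hn _ (.tLetsT a₁ a₂ b₁ b₂ bs)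
          | _ => simp [tag, hd] at ht
      | _ => simp [tag, hd] at ht
  | tb ζ₁ =>
      cases b with
      | tb ζ₂ => exact hn _ (.tTb ζ₁ ζ₂)
      | t b₀ bs =>
          cases b₀ with
          | tb ζ₂ => exact hn _ (.tTbT ζ₁ ζ₂ bs)
          | _ => simp [tag, hd] at ht
      | _ => simp [tag, hd] at ht
  | _ => simp [tag] at h5 h8 <;> omega

private theorem wf_of_normal_aux : ∀ n : ℕ, ∀ q : Tr, sz q ≤ n → NormalQ q →
    WFQ q := by
  intro n
  induction n using Nat.strong_induction_on with
  | _ n IH =>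
  intro q hsz hn
  have H : ∀ x : Tr, sz x < sz q → NormalQ x → WFQ x :=
    fun x hlt => IH (sz x) (lt_of_lt_of_le hlt hsz) x le_rfl
  cases q with
  | r => trivial
  | pb => trivial
  | pbb => trivial
  | ti => trivial
  | lam a =>
      refine ⟨H a (by simp only [sz]; omega) (nq_lam hn), ?_⟩
      rintro rfl
      exact hn _ .lamRefl
  | ap a b =>
      refine ⟨H a (by simp only [sz]; omega) (nq_apL hn),
        H b (by simp only [sz]; omega) (nq_apR hn), ?_⟩
      rintro ⟨rfl, rfl⟩
      exact hn _ .apRefl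
  | lets a b =>
      refine ⟨H a (by simp only [sz]; omega) (nq_letsL hn),
        H b (by simp only [sz]; omega) (nq_letsR hn), ?_⟩
      rintro ⟨rfl, rfl⟩
      exact hn _ .letsRefl
  | tb ζ =>
      refine ⟨fun i => H (ζ i) (sz_lt_tb ζ i) (nq_tb hn i), ?_⟩
      intro hall
      have : ζ = fun _ => Tr.r := funext hall
      subst this
      exact hn _ .tbRefl
  | t a b =>
      refine ⟨H a (by simp only [sz]; omega) (nq_tL hn),
        H b (by simp only [sz]; omega) (nq_tR hn), ?_, ?_, norm_not_fus hn⟩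
      · constructor
        · intro h0
          cases a <;> simp [tag] at h0
          exact hn _ (.tReflL b)
        · intro h9
          cases a <;> simp [tag] at h9
          rename_i x y
          exact hn _ (.tAssoc x y b)
      · rintro rfl
        exact hn _ (.tReflR a)
  | ext M =>
      exfalso
      obtain ⟨q', hq'⟩ := ext_step (nq_ext hn) (nq_ext_na hn)
      exact hn _ hq'

theorem wf_of_normal {q : Tr} (hn : NormalQ q) : WFQ q :=
  wf_of_normal_aux (sz q) q le_rfl hn

lemma rtg_normal_eq {α : Type*} {R : α → α → Prop} {a b : α}
    (h : Relation.ReflTransGen R a b) (hn : ∀ c, ¬R a c) : a = b := by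
  rcases h.cases_head with h1 | ⟨c, hc, _⟩
  · exact h1
  · exact absurd hc (hn c)

/-- Key uniqueness lemma: normalizing `q ∘ ⌈M⌉` for normal `q`, `M` gives back `q`. -/
theorem nfq_ext_eq {nfq : Tr → Tr} (hq : IsNFQ nfq) {q : Tr} {M : Tm}
    (hnq : NormalQ q) (hnM : NormalT M) (hna : ¬isAnn M) :
    nfq (.t q (.ext M)) = q := by
  have hgood : GoodQ (.t q (.ext M)) := ⟨good_of_normal hnq, hnM, hna⟩
  have h1 : Relation.ReflTransGen StepQ (.t q (.ext M)) q := by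
    refine Relation.ReflTransGen.tail ?_ (.tReflR q)
    exact (ext_red hnM hna).lift (fun x => Tr.t q x) (fun a b hab => .tR q hab)
  have e1 : phi (.t q (.ext M)) = phi q := (rtg_stepq_phi h1 hgood).1
  have e2 : phi q = q := phi_id (wf_of_normal hnq)
  obtain ⟨h2, hn2⟩ := hq (.t q (.ext M))
  have e3 := (rtg_stepq_phi h2 hgood).1
  have e4 : phi (nfq (.t q (.ext M))) = nfq (.t q (.ext M)) := phi_id (wf_of_normal hn2)
  rw [← e4, ← e3, e1, e2]

end CAU
namespace CAU

lemma eqvgen_lift {α β : Type*} {r : α → α → Prop} {p : β → β → Prop} (f : α → β)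
    (h : ∀ a b, r a b → p (f a) (f b)) {a b : α} (hab : Relation.EqvGen r a b) :
    Relation.EqvGen p (f a) (f b) := by
  induction hab with
  | rel x y hxy => exact .rel _ _ (h x y hxy)
  | refl x => exact .refl _
  | symm x y _ ih => exact .symm _ _ ih
  | trans x y z _ _ ih1 ih2 => exact .trans _ _ _ ih1 ih2

/-- congruence of `SRed`-multireduction through a context -/
lemma sred_rtg_ctx {nfq : Tr → Tr} (f : Tm → Tm)
    (hL : ∀ a b, LBeta nfq a b → LBeta nfq (f a) (f b))
    (hT : ∀ a b, StepT a b → StepT (f a) (f b))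
    {x y : Tm} (h : Relation.ReflTransGen (SRed nfq) x y) :
    Relation.ReflTransGen (SRed nfq) (f x) (f y) := by
  refine h.lift f ?_
  rintro a b (hl | he)
  · exact Or.inl (hL a b hl)
  · exact Or.inr (eqvgen_lift f hT he)

lemma rtg_update_one {α β : Type*} (F : (Fin 9 → α) → β) {R : α → α → Prop}
    {S : β → β → Prop}
    (hc : ∀ (ζ : Fin 9 → α) (i : Fin 9) (x' : α), R (ζ i) x' →
      S (F ζ) (F (Function.update ζ i x')))
    (ζ : Fin 9 → α) (i : Fin 9) {b : α} (hb : Relation.ReflTransGen R (ζ i) b) :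
    Relation.ReflTransGen S (F ζ) (F (Function.update ζ i b)) := by
  induction hb with
  | refl => rw [Function.update_eq_self]
  | tail h1 h2 ih =>
      rename_i mid c
      refine ih.tail ?_
      have := hc (Function.update ζ i mid) i c (by rwa [Function.update_self])
      rwa [Function.update_idem] at this

/-- `SRed` congruence for one inspection component. -/
lemma sred_insp_update {nfq : Tr → Tr} (ϑ : Fin 9 → Tm) (i : Fin 9) {b : Tm}
    (h : Relation.ReflTransGen (SRed nfq) (ϑ i) b) :
    Relation.ReflTransGen (SRed nfq) (.insp ϑ) (.insp (Function.update ϑ i b)) := by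
  refine rtg_update_one (fun ζ => Tm.insp ζ) ?_ ϑ i h
  rintro ζ j x' (hl | he)
  · exact Or.inl (.inspC j hl)
  · refine Or.inr ?_
    have hstep : ∀ a b : Tm, StepT a b → StepT (.insp (Function.update ζ j a))
        (.insp (Function.update ζ j b)) := by
      intro a b hab
      have h2 : StepT (.insp (Function.update ζ j a))
          (.insp (Function.update (Function.update ζ j a) j b)) :=
        .inspC j (by rw [Function.update_self]; exact hab)
      rwa [Function.update_idem] at h2
    simpa [Function.update_eq_self] using
      eqvgen_lift (fun x => Tm.insp (Function.update ζ j x)) hstep he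

lemma rtg_stepT_sred {nfq : Tr → Tr} {x y : Tm}
    (h : Relation.ReflTransGen StepT x y) :
    Relation.ReflTransGen (SRed nfq) x y := by
  induction h with
  | refl => exact .refl
  | tail _ hs ih => exact ih.tail (Or.inr (Relation.EqvGen.rel _ _ hs))

private theorem naive_sim_aux (nfq : Tr → Tr) (hq : IsNFQ nfq) :
    ∀ n : ℕ, ∀ M R : Tm, szT M ≤ n → NaiveBeta M R → NormalT M →
    Relation.ReflTransGen (SRed nfq) M R := by
  intro n
  induction n using Nat.strong_induction_on with
  | _ n IH =>
  intro M R hsz hb hn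
  have H : ∀ M' R' : Tm, szT M' < szT M → NaiveBeta M' R' → NormalT M' →
      Relation.ReflTransGen (SRed nfq) M' R' :=
    fun M' R' hlt => IH (szT M') (lt_of_lt_of_le hlt hsz) M' R' le_rfl
  cases hb with
  | beta M N =>
      have hM : NormalT M := nt_lam (nt_apL hn)
      have naM : ¬isAnn M := nt_lam_na (nt_apL hn)
      have hN : NormalT N := nt_apR hn
      have naN : ¬isAnn N := nt_apR_na hn
      refine Relation.ReflTransGen.head (Or.inl (LBeta.beta M N)) ?_
      -- trail reductions
      have t1 : Relation.ReflTransGen StepT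
          (.ann (.t (.ap (.lam (.ext M)) (.ext N)) .pb)
            (.sub (.er M) (.cons (.er N) .id)))
          (.ann (.t (.ap (.lam .r) (.ext N)) .pb)
            (.sub (.er M) (.cons (.er N) .id))) :=
        (ext_red hM naM).lift
          (fun x => Tm.ann (.t (.ap (.lam x) (.ext N)) .pb)
            (.sub (.er M) (.cons (.er N) .id)))
          (fun a b hab => .annQ _ (.tL _ (.apL _ (.lamC hab))))
      have t2 : Relation.ReflTransGen StepT
          (.ann (.t (.ap (.lam .r) (.ext N)) .pb)
            (.sub (.er M) (.cons (.er N) .id)))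
          (.ann (.t (.ap .r (.ext N)) .pb) (.sub (.er M) (.cons (.er N) .id))) :=
        .single (.annQ _ (.tL _ (.apL _ .lamRefl)))
      have t3 : Relation.ReflTransGen StepT
          (.ann (.t (.ap .r (.ext N)) .pb) (.sub (.er M) (.cons (.er N) .id)))
          (.ann (.t (.ap .r .r) .pb) (.sub (.er M) (.cons (.er N) .id))) :=
        (ext_red hN naN).lift
          (fun x => Tm.ann (.t (.ap .r x) .pb) (.sub (.er M) (.cons (.er N) .id)))
          (fun a b hab => .annQ _ (.tL _ (.apR _ hab)))
      have t4 : Relation.ReflTransGen StepT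
          (.ann (.t (.ap .r .r) .pb) (.sub (.er M) (.cons (.er N) .id)))
          (.ann .pb (.sub (.er M) (.cons (.er N) .id))) :=
        Relation.ReflTransGen.head (.annQ _ (.tL _ .apRefl))
          (.single (.annQ _ (.tReflL _)))
      have t5 : Relation.ReflTransGen StepT
          (.ann .pb (.sub (.er M) (.cons (.er N) .id)))
          (.ann .pb (.sub M (.cons (.er N) .id))) :=
        (er_red hM naM).lift
          (fun x => Tm.ann .pb (.sub x (.cons (.er N) .id)))
          (fun a b hab => .annM _ (.subM _ hab))
      have t6 : Relation.ReflTransGen StepT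
          (.ann .pb (.sub M (.cons (.er N) .id)))
          (.ann .pb (.sub M (.cons N .id))) :=
        (er_red hN naN).lift
          (fun x => Tm.ann .pb (.sub M (.cons x .id)))
          (fun a b hab => .annM _ (.subS _ (.consM _ hab)))
      exact rtg_stepT_sred ((((t1.trans t2).trans t3).trans t4).trans (t5.trans t6))
  | betaBang q M N =>
      have hN : NormalT N := nt_letsR hn
      have naN : ¬isAnn N := nt_letsR_na hn
      refine Relation.ReflTransGen.head (Or.inl (LBeta.betaBang q M N)) ?_
      have t1 : Relation.ReflTransGen StepT
          (.ann (.t (.lets .r (.ext N)) .pbb) (.sub (.er N) (.cons (.ann q M) .id)))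
          (.ann (.t (.lets .r .r) .pbb) (.sub (.er N) (.cons (.ann q M) .id))) :=
        (ext_red hN naN).lift
          (fun x => Tm.ann (.t (.lets .r x) .pbb) (.sub (.er N) (.cons (.ann q M) .id)))
          (fun a b hab => .annQ _ (.tL _ (.letsR _ hab)))
      have t2 : Relation.ReflTransGen StepT
          (.ann (.t (.lets .r .r) .pbb) (.sub (.er N) (.cons (.ann q M) .id)))
          (.ann .pbb (.sub (.er N) (.cons (.ann q M) .id))) :=
        Relation.ReflTransGen.head (.annQ _ (.tL _ .letsRefl))
          (.single (.annQ _ (.tReflL _)))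
      have t3 : Relation.ReflTransGen StepT
          (.ann .pbb (.sub (.er N) (.cons (.ann q M) .id)))
          (.ann .pbb (.sub N (.cons (.ann q M) .id))) :=
        (er_red hN naN).lift
          (fun x => Tm.ann .pbb (.sub x (.cons (.ann q M) .id)))
          (fun a b hab => .annM _ (.subM _ hab))
      exact rtg_stepT_sred ((t1.trans t2).trans t3)
  | insp hF =>
      rename_i q M M'
      have hnq : NormalQ q := nt_bangQ hn
      have hM : NormalT M := nt_bangM hn
      have na : ¬isAnn M := nt_bang_na hn
      refine Relation.ReflTransGen.single (Or.inl (LBeta.insp ?_))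
      rw [nfq_ext_eq hq hnq hM na]
      exact hF
  | lam hs =>
      exact sred_rtg_ctx _ (fun a b h => .lam h) (fun a b h => .lamC h)
        (H _ _ (by simp only [szT]; omega) hs (nt_lam hn))
  | apL N hs =>
      exact sred_rtg_ctx (fun x => Tm.ap x N) (fun a b h => .apL N h)
        (fun a b h => .apL N h)
        (H _ _ (by simp only [szT]; omega) hs (nt_apL hn))
  | apR M hs =>
      exact sred_rtg_ctx (fun x => Tm.ap M x) (fun a b h => .apR M h)
        (fun a b h => .apR M h)
        (H _ _ (by simp only [szT]; omega) hs (nt_apR hn))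
  | letsL N hs =>
      exact sred_rtg_ctx (fun x => Tm.lets x N) (fun a b h => .letsL N h)
        (fun a b h => .letsL N h)
        (H _ _ (by simp only [szT]; omega) hs (nt_letsL hn))
  | letsR M hs =>
      exact sred_rtg_ctx (fun x => Tm.lets M x) (fun a b h => .letsR M h)
        (fun a b h => .letsR M h)
        (H _ _ (by simp only [szT]; omega) hs (nt_letsR hn))
  | bang q hs =>
      exact sred_rtg_ctx (fun x => Tm.bang q x) (fun a b h => .bang q h)
        (fun a b h => .bangM q h)
        (H _ _ (by simp only [szT]; omega) hs (nt_bangM hn))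
  | ann q hs =>
      exact sred_rtg_ctx (fun x => Tm.ann q x) (fun a b h => .ann q h)
        (fun a b h => .annM q h)
        (H _ _ (by simp only [szT]; omega) hs (nt_annM hn))
  | inspC i hs =>
      rename_i ϑ M'
      exact sred_insp_update ϑ i
        (H _ _ (szT_lt_insp ϑ i) hs (nt_insp hn i))

theorem naive_sim {nfq : Tr → Tr} (hq : IsNFQ nfq) {M R : Tm}
    (hb : NaiveBeta M R) (hn : NormalT M) :
    Relation.ReflTransGen (SRed nfq) M R :=
  naive_sim_aux nfq hq (szT M) M R le_rfl hb hn

end CAU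
namespace CAU

/-- Relativized confluence of CAU⁻σ: if `M` reduces to `N` and `R`, and the στ-normal
forms of `N` and `R` are joinable in CAU⁻, then `N` and `R` are joinable in CAU⁻σ. -/
theorem relativized_confluence (nf : Tm → Tm) (hnf : IsNFT nf)
    (nfq : Tr → Tr) (hq : IsNFQ nfq) :
    ∀ M N R : Tm,
      Relation.ReflTransGen (SRed nfq) M N →
      Relation.ReflTransGen (SRed nfq) M R →
      (∃ S, Relation.ReflTransGen (CRed nf) (nf N) S ∧
            Relation.ReflTransGen (CRed nf) (nf R) S) →
      ∃ T, Relation.ReflTransGen (SRed nfq) N T ∧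
           Relation.ReflTransGen (SRed nfq) R T := by
  intro M N R _ _ hjoin
  obtain ⟨S, hs1, hs2⟩ := hjoin
  have sim : ∀ A B : Tm, Relation.ReflTransGen (CRed nf) A B → NormalT A →
      Relation.ReflTransGen (SRed nfq) A B := by
    intro A B h
    induction h using Relation.ReflTransGen.head_induction_on with
    | refl => exact fun _ => .refl
    | head hstep _ ih =>
        intro hA
        obtain ⟨R', hbeta, hc⟩ := hstep
        subst hc
        have h1 := naive_sim hq hbeta hA
        have h2 : Relation.ReflTransGen StepT R' (nf R') := (hnf R').1
        exact (h1.trans (rtg_stepT_sred h2)).trans (ih ((hnf R').2))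
  have n1 : Relation.ReflTransGen (SRed nfq) N (nf N) := rtg_stepT_sred (hnf N).1
  have r1 : Relation.ReflTransGen (SRed nfq) R (nf R) := rtg_stepT_sred (hnf R).1
  exact ⟨S, n1.trans (sim _ _ hs1 (hnf N).2), r1.trans (sim _ _ hs2 (hnf R).2)⟩

end CAU
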